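/- arXiv:0710.4023 — 9 statements merged into one kernel-verified Lean document; each statement's English description precedes it below -/
import Mathlib

section
/- For every positive integer n and every real t, the integral from 0 to t of (1-(1-x)^n)/x dx equals the sum over k from 1 to n of binom(n,k)(-1)^{k+1} t^k/k, which also equals the sum over k from 1 to n of (1-(1-t)^k)/k. -/
open MeasureTheory Finset intervalIntegral

lemma range_succ_eq_insert (n : ℕ) : Finset.range (n+1) = insert 0 (Finset.Icc 1 n) := by
  ext k; simp [Nat.lt_succ_iff]; omega

lemma lemA (n : ℕ) (x : ℝ) :
    1 - (1 - x)^n = ∑ k ∈ Finset.Icc 1 n, (n.choose k : ℝ) * (-1)^(k+1) * x^k := by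
  have h := add_pow (-x) 1 n
  have h2 : (1 - x)^n = ∑ k ∈ Finset.range (n+1), (-x)^k * (n.choose k : ℝ) := by
    rw [show (1:ℝ) - x = -x + 1 by ring, h]
    simp
  rw [h2, range_succ_eq_insert, Finset.sum_insert (by simp)]
  rw [Finset.sum_congr rfl (fun k _ => show (-x)^k * (n.choose k : ℝ)
      = -((n.choose k : ℝ) * (-1)^(k+1) * x^k) by rw [neg_pow]; ring)]
  simp

lemma lemGeom (n : ℕ) (x : ℝ) (hx : x ≠ 0) :
    (1 - (1 - x)^n) / x = ∑ k ∈ Finset.Icc 1 n, (1 - x)^(k-1) := by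
  have h1 : ∑ k ∈ Finset.Icc 1 n, (1 - x)^(k-1) = ∑ k ∈ Finset.range n, (1-x)^k := by
    rw [show Finset.Icc 1 n = Finset.Ico 1 (n+1) by rw [Finset.Ico_add_one_right_eq_Icc],
      Finset.sum_Ico_eq_sum_range]
    simp
  rw [h1, geom_sum_eq (by intro h; apply hx; linarith [h] : (1:ℝ) - x ≠ 1)]
  rw [show (1:ℝ) - x - 1 = -x by ring, div_neg, ← neg_div, neg_sub]

lemma ae_ne_zero : ∀ᵐ (x : ℝ), x ≠ 0 := by
  rw [MeasureTheory.ae_iff]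
  simp [show {a : ℝ | ¬a ≠ 0} = {0} by ext; simp, Real.volume_singleton]

theorem stmt_0 (n : ℕ) (hn : 0 < n) (t : ℝ) :
    (∫ x in (0:ℝ)..t, (1 - (1 - x) ^ n) / x) =
      ∑ k ∈ Finset.Icc 1 n, (n.choose k : ℝ) * (-1) ^ (k + 1) * t ^ k / k ∧
    (∫ x in (0:ℝ)..t, (1 - (1 - x) ^ n) / x) =
      ∑ k ∈ Finset.Icc 1 n, (1 - (1 - t) ^ k) / (k : ℝ) := by
  constructor
  · have hcong : (∫ x in (0:ℝ)..t, (1 - (1 - x) ^ n) / x)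
        = ∫ x in (0:ℝ)..t, ∑ k ∈ Finset.Icc 1 n, (n.choose k : ℝ) * (-1)^(k+1) * x^(k-1) := by
      apply intervalIntegral.integral_congr_ae
      filter_upwards [ae_ne_zero] with x hx _
      rw [lemA n x, Finset.sum_div]
      refine Finset.sum_congr rfl fun k hk => ?_
      simp only [Finset.mem_Icc] at hk
      rw [show x ^ k = x ^ (k-1) * x by rw [← pow_succ]; congr 1; omega]
      field_simp
    rw [hcong, intervalIntegral.integral_finset_sum (fun k _ => by
      exact (Continuous.intervalIntegrable (by continuity) 0 t))]
    refine Finset.sum_congr rfl fun k hk => ?_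
    simp only [Finset.mem_Icc] at hk
    rw [intervalIntegral.integral_const_mul, integral_pow]
    have hk1 : k - 1 + 1 = k := by omega
    have hc : ((k-1:ℕ):ℝ) = (k:ℝ) - 1 := by rw [Nat.cast_sub hk.1]; norm_num
    rw [hk1, hc, zero_pow (by omega : k ≠ 0)]
    have hkr : ((k:ℝ)) ≠ 0 := Nat.cast_ne_zero.mpr (by omega)
    field_simp
    rw [sub_add_cancel, sub_zero, mul_div_assoc, div_self hkr, mul_one]
  · have hcong : (∫ x in (0:ℝ)..t, (1 - (1 - x) ^ n) / x)
        = ∫ x in (0:ℝ)..t, ∑ k ∈ Finset.Icc 1 n, (1 - x)^(k-1) := by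
      apply intervalIntegral.integral_congr_ae
      filter_upwards [ae_ne_zero] with x hx _
      exact lemGeom n x hx
    rw [hcong, intervalIntegral.integral_finset_sum (fun k _ => by
      exact (Continuous.intervalIntegrable (by continuity) 0 t))]
    refine Finset.sum_congr rfl fun k hk => ?_
    simp only [Finset.mem_Icc] at hk
    have := intervalIntegral.integral_comp_sub_left (a := (0:ℝ)) (b := t)
      (fun x => x ^ (k-1)) 1
    rw [this, integral_pow]
    have hk1 : k - 1 + 1 = k := by omega
    have hc : ((k-1:ℕ):ℝ) = (k:ℝ) - 1 := by rw [Nat.cast_sub hk.1]; norm_num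
    rw [hk1, hc]
    norm_num
end

section
/- For every positive integer n, ∑_{k=1}^n binom(n,k) (-1)^{k+1}/k^2 = (1/2)(H_n)^2 + (1/2) H_n^{(2)}, where H_n = ∑_{k=1}^n 1/k and H_n^{(2)} = ∑_{k=1}^n 1/k^2. -/
open Finset

lemma alt_sum (n : ℕ) (hn : 0 < n) :
    ∑ k ∈ Icc 1 n, ((n.choose k : ℝ) * (-1) ^ (k + 1)) = 1 := by
  have h := Int.alternating_sum_range_choose (n := n)
  rw [if_neg hn.ne'] at h
  have h2 : ∑ i ∈ range (n + 1), (-1 : ℝ) ^ i * (n.choose i : ℝ) = 0 := by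
    have := congrArg (Int.cast : ℤ → ℝ) h
    push_cast at this
    simpa using this
  rw [Finset.sum_range_succ'] at h2
  simp only [pow_zero, Nat.choose_zero_right, Nat.cast_one, one_mul, mul_one] at h2
  have h3 : ∑ i ∈ range n, (-1 : ℝ) ^ (i+1) * (n.choose (i+1) : ℝ) = -1 := by
    linarith
  rw [← Finset.Ico_add_one_right_eq_Icc, Finset.sum_Ico_eq_sum_range]
  try simp only [Nat.add_sub_cancel]
  calc ∑ i ∈ range n, ((n.choose (1+i) : ℝ) * (-1)^(1+i+1))
      = ∑ i ∈ range n, -((-1 : ℝ)^(i+1) * (n.choose (i+1) : ℝ)) := by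
        apply Finset.sum_congr rfl; intro i _
        rw [add_comm 1 i]; ring
    _ = 1 := by rw [Finset.sum_neg_distrib, h3]; ring

lemma key (n k : ℕ) (hk : 1 ≤ k) :
    (n.choose (k-1) : ℝ) * ((n:ℝ)+1) = (k:ℝ) * ((n+1).choose k : ℝ) := by
  have h := Nat.add_one_mul_choose_eq n (k-1)
  have hk' : k - 1 + 1 = k := by omega
  simp only [Nat.succ_eq_add_one, hk'] at h
  have := congrArg (Nat.cast : ℕ → ℝ) h
  push_cast at this
  linear_combination this

lemma keyd (n k : ℕ) (hk : 1 ≤ k) :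
    (n.choose (k-1) : ℝ) = (k:ℝ) * ((n+1).choose k : ℝ) / ((n:ℝ)+1) := by
  have hne : ((n:ℝ)+1) ≠ 0 := by positivity
  field_simp
  linear_combination key n k hk

lemma lemB (n : ℕ) (hn : 0 < n) :
    ∑ k ∈ Icc 1 n, (n.choose k : ℝ) * (-1) ^ (k + 1) / k =
      ∑ k ∈ Icc 1 n, (1 : ℝ) / k := by
  induction n, hn using Nat.le_induction with
  | base => norm_num
  | succ n hn ih =>
    have hne : ((n:ℝ)+1) ≠ 0 := by positivity
    have hsplit : ∑ k ∈ Icc 1 (n+1), ((n+1).choose k : ℝ) * (-1) ^ (k + 1) / k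
        = ∑ k ∈ Icc 1 (n+1), (n.choose k : ℝ) * (-1) ^ (k + 1) / k
          + ∑ k ∈ Icc 1 (n+1), (n.choose (k-1) : ℝ) * (-1) ^ (k + 1) / k := by
      rw [← Finset.sum_add_distrib]
      apply Finset.sum_congr rfl
      intro k hk
      simp only [mem_Icc] at hk
      obtain ⟨k, rfl⟩ : ∃ j, k = j + 1 := ⟨k - 1, (Nat.sub_add_cancel hk.1).symm⟩
      rw [Nat.choose_succ_succ']
      push_cast
      try simp only [Nat.add_sub_cancel]
      ring
    have h1 : ∑ k ∈ Icc 1 (n+1), (n.choose k : ℝ) * (-1) ^ (k + 1) / k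
        = ∑ k ∈ Icc 1 n, (n.choose k : ℝ) * (-1) ^ (k + 1) / k := by
      rw [← Finset.Ico_add_one_right_eq_Icc, Finset.sum_Ico_succ_top (by omega), Finset.Ico_add_one_right_eq_Icc]
      simp [Nat.choose_succ_self]
    have h2 : ∑ k ∈ Icc 1 (n+1), (n.choose (k-1) : ℝ) * (-1) ^ (k + 1) / k
        = 1 / ((n:ℝ)+1) := by
      have heq : ∀ k ∈ Icc 1 (n+1), (n.choose (k-1) : ℝ) * (-1) ^ (k + 1) / k
          = (((n+1).choose k : ℝ) * (-1) ^ (k + 1)) / ((n:ℝ)+1) := by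
        intro k hk
        simp only [mem_Icc] at hk
        have hk0 : (k:ℝ) ≠ 0 := by exact_mod_cast Nat.one_le_iff_ne_zero.mp hk.1
        rw [keyd n k hk.1]
        field_simp
      rw [Finset.sum_congr rfl heq, ← Finset.sum_div, alt_sum (n+1) (by omega)]
    have hA : ∑ k ∈ Icc 1 (n+1), (1:ℝ)/k = ∑ k ∈ Icc 1 n, (1:ℝ)/k + 1/((n:ℝ)+1) := by
      rw [← Finset.Ico_add_one_right_eq_Icc, Finset.sum_Ico_succ_top (by omega), Finset.Ico_add_one_right_eq_Icc]
      push_cast; ring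
    rw [hsplit, h1, h2, ih, hA]

theorem stmt_2 (n : ℕ) (hn : 0 < n) :
    ∑ k ∈ Finset.Icc 1 n, (n.choose k : ℝ) * (-1) ^ (k + 1) / (k : ℝ) ^ 2 =
      (1 / 2) * (∑ k ∈ Finset.Icc 1 n, (1 : ℝ) / k) ^ 2 +
        (1 / 2) * ∑ k ∈ Finset.Icc 1 n, (1 : ℝ) / (k : ℝ) ^ 2 := by
  induction n, hn using Nat.le_induction with
  | base => norm_num
  | succ n hn ih =>
    have hne : ((n:ℝ)+1) ≠ 0 := by positivity
    have hsplit : ∑ k ∈ Icc 1 (n+1), ((n+1).choose k : ℝ) * (-1) ^ (k + 1) / (k:ℝ)^2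
        = ∑ k ∈ Icc 1 (n+1), (n.choose k : ℝ) * (-1) ^ (k + 1) / (k:ℝ)^2
          + ∑ k ∈ Icc 1 (n+1), (n.choose (k-1) : ℝ) * (-1) ^ (k + 1) / (k:ℝ)^2 := by
      rw [← Finset.sum_add_distrib]
      apply Finset.sum_congr rfl
      intro k hk
      simp only [mem_Icc] at hk
      obtain ⟨k, rfl⟩ : ∃ j, k = j + 1 := ⟨k - 1, (Nat.sub_add_cancel hk.1).symm⟩
      rw [Nat.choose_succ_succ']
      push_cast
      try simp only [Nat.add_sub_cancel]
      ring
    have h1 : ∑ k ∈ Icc 1 (n+1), (n.choose k : ℝ) * (-1) ^ (k + 1) / (k:ℝ)^2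
        = ∑ k ∈ Icc 1 n, (n.choose k : ℝ) * (-1) ^ (k + 1) / (k:ℝ)^2 := by
      rw [← Finset.Ico_add_one_right_eq_Icc, Finset.sum_Ico_succ_top (by omega), Finset.Ico_add_one_right_eq_Icc]
      simp [Nat.choose_succ_self]
    have h2 : ∑ k ∈ Icc 1 (n+1), (n.choose (k-1) : ℝ) * (-1) ^ (k + 1) / (k:ℝ)^2
        = (∑ k ∈ Icc 1 (n+1), (1:ℝ)/k) / ((n:ℝ)+1) := by
      have heq : ∀ k ∈ Icc 1 (n+1), (n.choose (k-1) : ℝ) * (-1) ^ (k + 1) / (k:ℝ)^2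
          = (((n+1).choose k : ℝ) * (-1) ^ (k + 1) / k) / ((n:ℝ)+1) := by
        intro k hk
        simp only [mem_Icc] at hk
        have hk0 : (k:ℝ) ≠ 0 := by exact_mod_cast Nat.one_le_iff_ne_zero.mp hk.1
        rw [keyd n k hk.1]
        field_simp
      rw [Finset.sum_congr rfl heq, ← Finset.sum_div, lemB (n+1) (by omega)]
    have hA : ∑ k ∈ Icc 1 (n+1), (1:ℝ)/k = ∑ k ∈ Icc 1 n, (1:ℝ)/k + 1/((n:ℝ)+1) := by
      rw [← Finset.Ico_add_one_right_eq_Icc, Finset.sum_Ico_succ_top (by omega), Finset.Ico_add_one_right_eq_Icc]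
      push_cast; ring
    have hB : ∑ k ∈ Icc 1 (n+1), (1:ℝ)/(k:ℝ)^2
        = ∑ k ∈ Icc 1 n, (1:ℝ)/(k:ℝ)^2 + 1/((n:ℝ)+1)^2 := by
      rw [← Finset.Ico_add_one_right_eq_Icc, Finset.sum_Ico_succ_top (by omega), Finset.Ico_add_one_right_eq_Icc]
      push_cast; ring
    rw [hsplit, h1, h2, ih, hA, hB]
    field_simp
    ring
end

section
/- For every positive integer n, ∑_{k=1}^n binom(n,k)(-1)^{k+1}/k^3 = ∑_{k=1}^n (1/k) ∑_{l=1}^k (1/l) ∑_{m=1}^l (1/m). -/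
open Finset

lemma icc_to_range (m : ℕ) (f : ℕ → ℝ) :
    ∑ k ∈ Finset.Icc 1 m, f k = ∑ j ∈ Finset.range m, f (j + 1) := by
  induction m with
  | zero => simp
  | succ p ih =>
    rw [Finset.sum_Icc_succ_top (by omega), Finset.sum_range_succ, ih]

lemma alt_sum_choose (n : ℕ) (hn : 0 < n) :
    ∑ k ∈ Finset.Icc 1 n, (n.choose k : ℝ) * (-1) ^ (k + 1) = 1 := by
  have h := Int.alternating_sum_range_choose (n := n)
  rw [if_neg hn.ne'] at h
  have h2 : ∑ i ∈ Finset.range (n + 1), (-1 : ℝ) ^ i * (n.choose i : ℝ) = 0 := by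
    have := congrArg (fun z : ℤ => (z : ℝ)) h
    push_cast at this
    simpa using this
  rw [Finset.sum_range_succ'] at h2
  simp only [Nat.choose_zero_right, pow_zero, Nat.cast_one, mul_one, one_mul] at h2
  rw [icc_to_range]
  have : ∑ j ∈ Finset.range n, (n.choose (j + 1) : ℝ) * (-1) ^ (j + 1 + 1)
      = ∑ j ∈ Finset.range n, -((-1 : ℝ) ^ (j + 1) * (n.choose (j + 1) : ℝ)) := by
    apply Finset.sum_congr rfl
    intro j _
    ring
  rw [this, Finset.sum_neg_distrib]
  linarith

lemma key_step (f : ℕ → ℝ) (n : ℕ) :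
    ∑ k ∈ Finset.Icc 1 (n + 1), ((n + 1).choose k : ℝ) * (-1) ^ (k + 1) * f k / k
      = (∑ k ∈ Finset.Icc 1 n, (n.choose k : ℝ) * (-1) ^ (k + 1) * f k / k)
        + (1 / (n + 1 : ℝ)) *
          ∑ k ∈ Finset.Icc 1 (n + 1), ((n + 1).choose k : ℝ) * (-1) ^ (k + 1) * f k := by
  rw [icc_to_range, icc_to_range, icc_to_range]
  push_cast
  have hsplit : ∀ j ∈ Finset.range (n + 1),
      ((n + 1).choose (j + 1) : ℝ) * (-1) ^ (j + 1 + 1) * f (j + 1) / ((j : ℝ) + 1)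
      = (n.choose (j + 1) : ℝ) * (-1) ^ (j + 1 + 1) * f (j + 1) / ((j : ℝ) + 1)
        + (1 / (n + 1 : ℝ)) * (((n + 1).choose (j + 1) : ℝ) * (-1) ^ (j + 1 + 1) * f (j + 1)) := by
    intro j _
    have hj1 : ((j : ℝ) + 1) ≠ 0 := by positivity
    have hn1 : ((n : ℝ) + 1) ≠ 0 := by positivity
    have hc : ((n + 1).choose (j + 1) : ℝ) = (n.choose j : ℝ) + (n.choose (j + 1) : ℝ) := by
      rw [Nat.choose_succ_succ]
      push_cast
      ring
    have hmul : ((n : ℝ) + 1) * (n.choose j : ℝ) = ((n + 1).choose (j + 1) : ℝ) * ((j : ℝ) + 1) := by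
      have h := Nat.add_one_mul_choose_eq n j
      have h2 := congrArg (fun z : ℕ => (z : ℝ)) h
      push_cast at h2
      linarith
    have hd : (n.choose j : ℝ) / ((j : ℝ) + 1) = ((n + 1).choose (j + 1) : ℝ) / ((n : ℝ) + 1) := by
      rw [div_eq_div_iff hj1 hn1]
      linarith
    rw [hc, show ((n.choose j : ℝ) + (n.choose (j + 1) : ℝ)) * (-1) ^ (j + 1 + 1) * f (j + 1) / ((j : ℝ) + 1)
        = (n.choose (j + 1) : ℝ) * (-1) ^ (j + 1 + 1) * f (j + 1) / ((j : ℝ) + 1)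
          + ((n.choose j : ℝ) / ((j : ℝ) + 1)) * ((-1) ^ (j + 1 + 1) * f (j + 1)) from by ring,
      hd, hc]
    ring
  rw [Finset.sum_congr rfl hsplit, Finset.sum_add_distrib, ← Finset.mul_sum,
    Finset.sum_range_succ, Nat.choose_succ_self]
  push_cast
  ring

lemma A1 (n : ℕ) :
    ∑ k ∈ Finset.Icc 1 n, (n.choose k : ℝ) * (-1) ^ (k + 1) * 1 / k
      = ∑ k ∈ Finset.Icc 1 n, (1 : ℝ) / k := by
  induction n with
  | zero => simp
  | succ m ih =>
    conv_rhs => rw [Finset.sum_Icc_succ_top (by omega)]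
    rw [key_step (fun _ => 1) m, ih]
    have h1 : ∑ k ∈ Finset.Icc 1 (m + 1), ((m + 1).choose k : ℝ) * (-1) ^ (k + 1) * 1
        = ∑ k ∈ Finset.Icc 1 (m + 1), ((m + 1).choose k : ℝ) * (-1) ^ (k + 1) := by
      simp [mul_one]
    rw [h1, alt_sum_choose (m + 1) (Nat.succ_pos m)]
    push_cast
    ring

lemma A2 (n : ℕ) :
    ∑ k ∈ Finset.Icc 1 n, (n.choose k : ℝ) * (-1) ^ (k + 1) * (1 / k) / k
      = ∑ k ∈ Finset.Icc 1 n, (1 / (k : ℝ)) * ∑ l ∈ Finset.Icc 1 k, (1 : ℝ) / l := by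
  induction n with
  | zero => simp
  | succ m ih =>
    conv_rhs => rw [Finset.sum_Icc_succ_top (by omega)]
    rw [key_step (fun k => 1 / (k : ℝ)) m, ih]
    have h1 : ∑ k ∈ Finset.Icc 1 (m + 1), ((m + 1).choose k : ℝ) * (-1) ^ (k + 1) * (1 / (k : ℝ))
        = ∑ k ∈ Finset.Icc 1 (m + 1), ((m + 1).choose k : ℝ) * (-1) ^ (k + 1) * 1 / k := by
      apply Finset.sum_congr rfl
      intro k _
      ring
    rw [h1, A1 (m + 1)]
    push_cast
    ring

lemma A3 (n : ℕ) :
    ∑ k ∈ Finset.Icc 1 n, (n.choose k : ℝ) * (-1) ^ (k + 1) * (1 / (k : ℝ) ^ 2) / k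
      = ∑ k ∈ Finset.Icc 1 n, (1 / (k : ℝ)) *
          ∑ l ∈ Finset.Icc 1 k, (1 / (l : ℝ)) * ∑ m ∈ Finset.Icc 1 l, (1 : ℝ) / m := by
  induction n with
  | zero => simp
  | succ m ih =>
    conv_rhs => rw [Finset.sum_Icc_succ_top (by omega)]
    rw [key_step (fun k => 1 / (k : ℝ) ^ 2) m, ih]
    have h1 : ∑ k ∈ Finset.Icc 1 (m + 1),
          ((m + 1).choose k : ℝ) * (-1) ^ (k + 1) * (1 / (k : ℝ) ^ 2)
        = ∑ k ∈ Finset.Icc 1 (m + 1), ((m + 1).choose k : ℝ) * (-1) ^ (k + 1) * (1 / k) / k := by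
      apply Finset.sum_congr rfl
      intro k _
      ring
    rw [h1, A2 (m + 1)]
    push_cast
    ring

theorem stmt_4 (n : ℕ) (hn : 0 < n) :
    ∑ k ∈ Finset.Icc 1 n, (n.choose k : ℝ) * (-1) ^ (k + 1) / (k : ℝ) ^ 3 =
      ∑ k ∈ Finset.Icc 1 n, (1 / (k : ℝ)) *
        ∑ l ∈ Finset.Icc 1 k, (1 / (l : ℝ)) * ∑ m ∈ Finset.Icc 1 l, (1 : ℝ) / m := by
  rw [← A3 n]
  apply Finset.sum_congr rfl
  intro k _
  ring
end

section
/- Let (a_k) and (b_k) be sequences in a field with b_n = ∑_{k=1}^n binom(n,k) a_k for all n ≥ 1. Then for all n ≥ 1, ∑_{k=1}^n b_k/k = ∑_{k=1}^n binom(n,k) a_k/k. -/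
open Finset

theorem stmt_7 {F : Type*} [Field F] [CharZero F] (a b : ℕ → F)
    (hab : ∀ n : ℕ, 1 ≤ n → b n = ∑ k ∈ Finset.Icc 1 n, (n.choose k : F) * a k) :
    ∀ n : ℕ, 1 ≤ n →
      ∑ k ∈ Finset.Icc 1 n, b k / (k : F) =
        ∑ k ∈ Finset.Icc 1 n, (n.choose k : F) * a k / (k : F) := by
  intro n hn
  induction n with
  | zero => omega
  | succ n ih =>
    rcases Nat.lt_or_ge n 1 with h1 | hn'
    · have : n = 0 := by omega
      subst this
      simp [hab 1 le_rfl]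
    · have IH := ih hn'
      rw [Finset.sum_Icc_succ_top (by omega : 1 ≤ n+1), IH,
          Finset.sum_Icc_succ_top (by omega : 1 ≤ n+1),
          hab (n+1) (by omega), Finset.sum_Icc_succ_top (by omega : 1 ≤ n+1),
          add_div, Finset.sum_div]
      have key : ∀ k ∈ Finset.Icc 1 n, ((n+1).choose k : F) * a k / k
          = (n.choose k : F) * a k / k + ((n+1).choose k : F) * a k / (n+1) := by
        intro k hk
        simp only [Finset.mem_Icc] at hk
        obtain ⟨m, rfl⟩ : ∃ m, k = m + 1 := ⟨k - 1, by omega⟩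
        have hc : (n+1).choose (m+1) = n.choose m + n.choose (m+1) :=
          Nat.choose_succ_succ n m
        have hm : (n+1) * n.choose m = (n+1).choose (m+1) * (m+1) :=
          Nat.add_one_mul_choose_eq n m
        have hmF : ((n:F)+1) * (n.choose m : F)
            = ((n.choose m : F) + (n.choose (m+1) : F)) * ((m:F)+1) := by
          rw [hc] at hm; exact_mod_cast hm
        rw [hc]
        push_cast
        have h1 : ((m:F)+1) ≠ 0 := Nat.cast_add_one_ne_zero m
        have h2 : ((n:F)+1) ≠ 0 := Nat.cast_add_one_ne_zero n
        field_simp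
        linear_combination a (m+1) * hmF
      rw [Finset.sum_congr rfl key, Finset.sum_add_distrib]
      push_cast
      ring
end

section
/- For every positive integer n and every real x > 0, ∑_{k=1}^n k!/(k·(1+x)(2+x)⋯(k+x)) = 1/x − n!/(x(1+x)⋯(n+x)). -/
open Finset

theorem stmt_9 (n : ℕ) (hn : 0 < n) (x : ℝ) (hx : 0 < x) :
    ∑ k ∈ Finset.Icc 1 n, (k.factorial : ℝ) /
        ((k : ℝ) * ∏ j ∈ Finset.Icc 1 k, ((j : ℝ) + x)) =
      1 / x - (n.factorial : ℝ) / (x * ∏ j ∈ Finset.Icc 1 n, ((j : ℝ) + x)) := by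
  induction n with
  | zero => exact absurd hn (lt_irrefl 0)
  | succ n ih =>
    have hP : ∀ m : ℕ, (0 : ℝ) < ∏ j ∈ Finset.Icc 1 m, ((j : ℝ) + x) := by
      intro m
      apply Finset.prod_pos
      intro j hj
      have : (1 : ℕ) ≤ j := (Finset.mem_Icc.mp hj).1
      have : (1 : ℝ) ≤ (j : ℝ) := by exact_mod_cast this
      linarith
    rcases Nat.eq_zero_or_pos n with h0 | hn'
    · subst h0
      simp only [Finset.Icc_self, Finset.sum_singleton, Finset.prod_singleton]
      have h1 : (1 : ℝ) + x ≠ 0 := by linarith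
      field_simp
      norm_num
    · rw [Finset.sum_Icc_succ_top (by omega : 1 ≤ n + 1), ih hn']
      have hPn := hP n
      have hPn1 := hP (n + 1)
      have hprod : ∏ j ∈ Finset.Icc 1 (n+1), ((j : ℝ) + x)
          = (∏ j ∈ Finset.Icc 1 n, ((j : ℝ) + x)) * (((n:ℝ)+1) + x) := by
        rw [Finset.prod_Icc_succ_top (by omega : 1 ≤ n + 1)]
        push_cast; ring
      have hfac : ((n+1).factorial : ℝ) = ((n:ℝ)+1) * n.factorial := by
        push_cast [Nat.factorial_succ]; ring
      rw [hprod, hfac]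
      have hx' : x ≠ 0 := ne_of_gt hx
      have hn1 : ((n:ℝ)+1) ≠ 0 := by positivity
      have hnx : ((n:ℝ)+1) + x ≠ 0 := by positivity
      have hPn' : (∏ j ∈ Finset.Icc 1 n, ((j : ℝ) + x)) ≠ 0 := ne_of_gt hPn
      push_cast
      field_simp
      ring
end

section
/- The series ∑_{n=1}^∞ H_n/(n·2^n) converges and equals π²/12, where H_n is the n-th harmonic number. -/
open Finset Real Filter Topology

/-! Auxiliary development: the dilogarithm on `[0,1]` via a clamped power series. -/

noncomputable def cl (x : ℝ) : ℝ := max 0 (min 1 x)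

lemma cl_cont : Continuous cl := continuous_const.max (continuous_const.min continuous_id)

lemma cl_nonneg (x : ℝ) : 0 ≤ cl x := le_max_left _ _

lemma cl_le_one (x : ℝ) : cl x ≤ 1 := max_le one_pos.le (min_le_left _ _)

lemma cl_eq {x : ℝ} (h0 : 0 ≤ x) (h1 : x ≤ 1) : cl x = x := by
  unfold cl; rw [min_eq_right h1, max_eq_right h0]

noncomputable def li2 (x : ℝ) : ℝ := ∑' n : ℕ, (cl x) ^ (n + 1) / ((n : ℝ) + 1) ^ 2

lemma u_summable : Summable (fun n : ℕ => 1 / ((n : ℝ) + 1) ^ 2) := by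
  have := (summable_nat_add_iff 1).mpr (Real.summable_one_div_nat_pow.mpr one_lt_two)
  simpa using this

lemma li2_bound (n : ℕ) (x : ℝ) :
    ‖(cl x) ^ (n + 1) / ((n : ℝ) + 1) ^ 2‖ ≤ 1 / ((n : ℝ) + 1) ^ 2 := by
  have h1 : |cl x| ≤ 1 := abs_le.mpr ⟨by linarith [cl_nonneg x], cl_le_one x⟩
  have hd : (0:ℝ) < ((n : ℝ) + 1) ^ 2 := by positivity
  rw [norm_div, norm_pow, Real.norm_eq_abs, Real.norm_eq_abs, abs_of_pos hd]
  exact div_le_div_of_nonneg_right (pow_le_one₀ (abs_nonneg _) h1) hd.le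

lemma li2_summable (x : ℝ) : Summable (fun n : ℕ => (cl x) ^ (n + 1) / ((n : ℝ) + 1) ^ 2) :=
  Summable.of_norm_bounded u_summable (fun n => li2_bound n x)

lemma hasSum_li2 {x : ℝ} (h0 : 0 ≤ x) (h1 : x ≤ 1) :
    HasSum (fun n : ℕ => x ^ (n + 1) / ((n : ℝ) + 1) ^ 2) (li2 x) := by
  simpa [li2, cl_eq h0 h1] using (li2_summable x).hasSum

lemma li2_cont : Continuous li2 :=
  continuous_tsum (fun n => ((cl_cont.pow _).div_const _)) u_summable (fun n x => li2_bound n x)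

lemma li2_zero : li2 0 = 0 := by
  have h0 : (fun n : ℕ => (0:ℝ) ^ (n + 1) / ((n : ℝ) + 1) ^ 2) = fun _ => 0 := by
    funext n; simp
  have h := hasSum_li2 (le_refl (0:ℝ)) zero_le_one
  rw [h0] at h
  exact (hasSum_zero.unique h).symm

lemma li2_one : li2 1 = π ^ 2 / 6 := by
  have hz : HasSum (fun n : ℕ => (1:ℝ) / ((n:ℝ)) ^ 2) (π ^ 2 / 6) := hasSum_zeta_two
  have hz' : HasSum (fun n : ℕ => (1:ℝ) / ((n:ℝ) + 1) ^ 2) (π ^ 2 / 6) := by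
    simpa using (hasSum_nat_add_iff' (f := fun n : ℕ => (1:ℝ) / ((n:ℝ)) ^ 2) 1).mpr hz
  have h := hasSum_li2 zero_le_one le_rfl
  simp only [one_pow] at h
  exact h.unique hz'

lemma li2_hasDerivAt {x : ℝ} (hx : x ∈ Set.Ioo (0:ℝ) 1) :
    HasDerivAt li2 (-Real.log (1 - x) / x) x := by
  obtain ⟨hx0, hx1⟩ := hx
  set r : ℝ := (1 + x) / 2 with hr
  have hr0 : 0 < r := by positivity
  have hxr : x < r := by simp only [hr]; linarith
  have hr1 : r < 1 := by simp only [hr]; linarith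
  have hderiv : ∀ (n : ℕ) (y : ℝ),
      HasDerivAt (fun z : ℝ => z ^ (n + 1) / ((n : ℝ) + 1) ^ 2) (y ^ n / ((n : ℝ) + 1)) y := by
    intro n y
    have h := (hasDerivAt_pow (n + 1) y).div_const (((n : ℝ) + 1) ^ 2)
    refine h.congr_deriv ?_
    have : ((n:ℝ) + 1) ≠ 0 := by positivity
    push_cast
    field_simp
  have hF : HasDerivAt (fun z : ℝ => ∑' n : ℕ, z ^ (n + 1) / ((n : ℝ) + 1) ^ 2)
      (∑' n : ℕ, x ^ n / ((n : ℝ) + 1)) x := by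
    apply hasDerivAt_tsum_of_isPreconnected (u := fun n : ℕ => r ^ n)
      (t := Set.Ioo (-r) r) (y₀ := 0)
      (summable_geometric_of_lt_one hr0.le hr1) isOpen_Ioo
      (convex_Ioo _ _).isPreconnected
      (fun n y _ => hderiv n y) ?_ (by constructor <;> linarith) ?_
      (by constructor <;> linarith)
    · intro n y hy
      have hyr : |y| ≤ r := by
        rw [abs_le]; exact ⟨hy.1.le, hy.2.le⟩
      have h1 : (1:ℝ) ≤ (n:ℝ) + 1 := le_add_of_nonneg_left (Nat.cast_nonneg n)
      rw [Real.norm_eq_abs, abs_div, abs_pow]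
      calc |y| ^ n / |(n:ℝ) + 1| ≤ r ^ n / 1 := by
            apply div_le_div₀ (by positivity) (pow_le_pow_left₀ (abs_nonneg _) hyr n) one_pos
            rw [abs_of_pos (by positivity : (0:ℝ) < (n:ℝ)+1)]; exact h1
        _ = r ^ n := div_one _
    · apply summable_of_ne_finset_zero (s := ∅)
      intro n _
      simp
  have hlog : HasSum (fun n : ℕ => x ^ n / ((n : ℝ) + 1)) (-Real.log (1 - x) / x) := by
    have habs : |x| < 1 := by rw [abs_of_pos hx0]; exact hx1
    have h := (Real.hasSum_pow_div_log_of_abs_lt_one habs).div_const x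
    have e : (fun n : ℕ => x ^ n / ((n : ℝ) + 1)) = (fun i : ℕ => x ^ (i + 1) / ((i : ℝ) + 1) / x) := by
      funext n
      rw [pow_succ']
      field_simp
    rw [e]; exact h
  rw [hlog.tsum_eq] at hF
  apply hF.congr_of_eventuallyEq
  have hmem : Set.Ioo (0:ℝ) 1 ∈ 𝓝 x := isOpen_Ioo.mem_nhds ⟨hx0, hx1⟩
  filter_upwards [hmem] with z hz
  rw [li2, cl, min_eq_right hz.2.le, max_eq_right hz.1.le]

noncomputable def G (x : ℝ) : ℝ := li2 x + li2 (1 - x) + Real.log x * Real.log (1 - x)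

lemma G_hasDerivAt {y : ℝ} (hy : y ∈ Set.Ioo (0:ℝ) 1) : HasDerivAt G 0 y := by
  obtain ⟨h0, h1⟩ := hy
  have h1y : 0 < 1 - y := by linarith
  have d1 : HasDerivAt li2 (-Real.log (1 - y) / y) y := li2_hasDerivAt ⟨h0, h1⟩
  have d2 : HasDerivAt (fun x : ℝ => li2 (1 - x)) (-(-Real.log (1 - (1 - y)) / (1 - y))) y := by
    have inner : HasDerivAt (fun x : ℝ => 1 - x) (-1) y := by
      simpa using (hasDerivAt_id y).const_sub 1
    have := (li2_hasDerivAt (x := 1 - y) ⟨h1y, by linarith⟩).comp y inner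
    exact this.congr_deriv (by ring)
  have d3 : HasDerivAt (fun x : ℝ => Real.log x * Real.log (1 - x))
      (y⁻¹ * Real.log (1 - y) + Real.log y * -(1 - y)⁻¹) y := by
    have dl : HasDerivAt Real.log y⁻¹ y := Real.hasDerivAt_log h0.ne'
    have dl2 : HasDerivAt (fun x : ℝ => Real.log (1 - x)) (-(1 - y)⁻¹) y := by
      have inner : HasDerivAt (fun x : ℝ => 1 - x) (-1) y := by
        simpa using (hasDerivAt_id y).const_sub 1
      have := (Real.hasDerivAt_log h1y.ne').comp y inner
      exact this.congr_deriv (by ring)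
    exact dl.mul dl2
  have := (d1.add d2).add d3
  refine HasDerivAt.congr_deriv (f := G) this ?_
  have hy' : y ≠ 0 := h0.ne'
  have h1y' : (1 - y) ≠ 0 := h1y.ne'
  simp only [sub_sub_cancel]
  field_simp
  ring

lemma G_const {x : ℝ} (hx : x ∈ Set.Ioo (0:ℝ) 1) : G x = G (1/2) := by
  have key : ∀ a b : ℝ, a ∈ Set.Ioo (0:ℝ) 1 → b ∈ Set.Ioo (0:ℝ) 1 → a ≤ b → G b = G a := by
    intro a b ha hb hab
    have hsub : Set.Icc a b ⊆ Set.Ioo (0:ℝ) 1 := fun y hy =>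
      ⟨lt_of_lt_of_le ha.1 hy.1, lt_of_le_of_lt hy.2 hb.2⟩
    have hcont : ContinuousOn G (Set.Icc a b) := fun y hy =>
      ((G_hasDerivAt (hsub hy)).continuousAt).continuousWithinAt
    have hderiv : ∀ y ∈ Set.Ico a b, HasDerivWithinAt G 0 (Set.Ici y) y := fun y hy =>
      (G_hasDerivAt (hsub ⟨hy.1, hy.2.le⟩)).hasDerivWithinAt
    exact constant_of_has_deriv_right_zero hcont hderiv b ⟨hab, le_rfl⟩
  have hhalf : (1/2 : ℝ) ∈ Set.Ioo (0:ℝ) 1 := by norm_num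
  rcases le_total x (1/2 : ℝ) with h | h
  · exact (key x (1/2) hx hhalf h).symm
  · exact key (1/2) x hhalf hx h

lemma G_tendsto : Tendsto G (𝓝[>] (0:ℝ)) (𝓝 (π ^ 2 / 6)) := by
  have t1 : Tendsto (fun x : ℝ => li2 x) (𝓝[>] 0) (𝓝 0) := by
    have := (li2_cont.tendsto 0).mono_left (nhdsWithin_le_nhds (s := Set.Ioi (0:ℝ)))
    rwa [li2_zero] at this
  have t2 : Tendsto (fun x : ℝ => li2 (1 - x)) (𝓝[>] 0) (𝓝 (π ^ 2 / 6)) := by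
    have c : Continuous (fun x : ℝ => li2 (1 - x)) :=
      li2_cont.comp (continuous_const.sub continuous_id)
    have := (c.tendsto 0).mono_left (nhdsWithin_le_nhds (s := Set.Ioi (0:ℝ)))
    simpa [li2_one] using this
  have t3 : Tendsto (fun x : ℝ => Real.log x * Real.log (1 - x)) (𝓝[>] 0) (𝓝 0) := by
    have base : Tendsto (fun x : ℝ => Real.log x * x) (𝓝[>] 0) (𝓝 0) := by
      have := tendsto_log_mul_rpow_nhdsGT_zero (r := 1) one_pos
      refine this.congr' ?_
      filter_upwards [self_mem_nhdsWithin] with x hx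
      rw [Real.rpow_one]
    have bt : Tendsto (fun x : ℝ => -2 * (Real.log x * x)) (𝓝[>] 0) (𝓝 0) := by
      simpa using base.const_mul (-2 : ℝ)
    apply squeeze_zero_norm' ?_ bt
    have hmem : Set.Ioo (0:ℝ) (1/2) ∈ 𝓝[>] (0:ℝ) :=
      Ioo_mem_nhdsGT_of_mem ⟨le_rfl, by norm_num⟩
    filter_upwards [hmem] with x hx
    obtain ⟨hx0, hx2⟩ := hx
    have h1x : (1/2 : ℝ) ≤ 1 - x := by linarith
    have h1x0 : 0 < 1 - x := by linarith
    have hlogx : Real.log x < 0 := Real.log_neg hx0 (by linarith)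
    have hlog1x : Real.log (1 - x) ≤ 0 := Real.log_nonpos h1x0.le (by linarith)
    have hbound : -Real.log (1 - x) ≤ 2 * x := by
      have hl := Real.one_sub_inv_le_log_of_pos h1x0
      have hinv : (1 - x)⁻¹ ≤ 2 := by
        rw [inv_le_comm₀ h1x0 (by norm_num)]
        linarith
      have heq : (1 - x)⁻¹ - 1 = x * (1 - x)⁻¹ := by field_simp; ring
      have hmul : x * (1 - x)⁻¹ ≤ x * 2 := mul_le_mul_of_nonneg_left hinv hx0.le
      linarith
    rw [Real.norm_eq_abs, abs_mul, abs_of_neg hlogx, abs_of_nonpos hlog1x]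
    calc -Real.log x * -Real.log (1 - x) ≤ -Real.log x * (2 * x) := by
          apply mul_le_mul_of_nonneg_left hbound (by linarith)
      _ = -2 * (Real.log x * x) := by ring
  have := (t1.add t2).add t3
  show Tendsto (fun x => li2 x + li2 (1 - x) + Real.log x * Real.log (1 - x)) _ _
  simpa using this

lemma li2_half : li2 (1/2) = π ^ 2 / 12 - (Real.log 2) ^ 2 / 2 := by
  have hGhalf : G (1/2) = π ^ 2 / 6 := by
    have hconst : Tendsto G (𝓝[>] (0:ℝ)) (𝓝 (G (1/2))) := by
      have hmem : Set.Ioo (0:ℝ) 1 ∈ 𝓝[>] (0:ℝ) := Ioo_mem_nhdsGT_of_mem ⟨le_rfl, one_pos⟩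
      refine Tendsto.congr' ?_ tendsto_const_nhds
      filter_upwards [hmem] with x hx
      exact (G_const hx).symm
    exact tendsto_nhds_unique hconst G_tendsto
  have hG2 : G (1/2) = 2 * li2 (1/2) + (Real.log 2) ^ 2 := by
    have hl : Real.log (1/2 : ℝ) = -Real.log 2 := by
      rw [one_div, Real.log_inv]
    simp only [G]
    norm_num [hl]
    ring
  rw [hG2] at hGhalf
  linarith

/-! The Cauchy product part. -/

noncomputable def aa (n : ℕ) : ℝ := (1/2 : ℝ) ^ (n + 1) / ((n : ℝ) + 1)

lemma hasSum_aa : HasSum aa (Real.log 2) := by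
  have h : |(1/2 : ℝ)| < 1 := by rw [abs_of_pos] <;> norm_num
  have h1 := Real.hasSum_pow_div_log_of_abs_lt_one h
  have h2 : -Real.log (1 - 1/2 : ℝ) = Real.log 2 := by
    rw [show (1 - 1/2 : ℝ) = 2⁻¹ by norm_num, Real.log_inv, neg_neg]
  rw [h2] at h1
  exact h1

lemma summable_norm_aa : Summable (fun n => ‖aa n‖) := by
  have h : ∀ n, ‖aa n‖ = aa n := fun n => by
    rw [Real.norm_eq_abs, abs_of_nonneg]; unfold aa; positivity
  simp_rw [h]
  exact hasSum_aa.summable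

lemma sum_inv_mul (n : ℕ) :
    ∑ k ∈ range (n + 1), (1:ℝ) / (((k:ℝ) + 1) * (((n - k : ℕ) : ℝ) + 1))
      = 2 / ((n : ℝ) + 2) * ∑ k ∈ range (n + 1), (1:ℝ) / ((k:ℝ) + 1) := by
  have hrefl : ∑ k ∈ range (n + 1), (1:ℝ) / (((n - k : ℕ) : ℝ) + 1)
      = ∑ k ∈ range (n + 1), (1:ℝ) / ((k:ℝ) + 1) := by
    have := Finset.sum_range_reflect (fun k => (1:ℝ) / ((k:ℝ) + 1)) (n + 1)
    simpa using this
  have hterm : ∀ k ∈ range (n + 1),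
      (1:ℝ) / (((k:ℝ) + 1) * (((n - k : ℕ) : ℝ) + 1))
        = 1 / ((n : ℝ) + 2) * ((1:ℝ) / ((k:ℝ) + 1) + (1:ℝ) / (((n - k : ℕ) : ℝ) + 1)) := by
    intro k hk
    have hk' : k ≤ n := Nat.lt_succ_iff.mp (mem_range.mp hk)
    have hcast : ((n - k : ℕ) : ℝ) = (n : ℝ) - (k : ℝ) := by
      rw [Nat.cast_sub hk']
    rw [hcast]
    have h1 : ((k:ℝ) + 1) ≠ 0 := by positivity
    have h2 : ((n:ℝ) - (k:ℝ) + 1) ≠ 0 := by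
      have hkn : (k:ℝ) ≤ (n:ℝ) := by exact_mod_cast hk'
      have : (0:ℝ) < (n:ℝ) - (k:ℝ) + 1 := by linarith
      linarith
    have h3 : ((n:ℝ) + 2) ≠ 0 := by positivity
    field_simp
    ring
  rw [Finset.sum_congr rfl hterm, ← Finset.mul_sum, Finset.sum_add_distrib, hrefl]
  ring

lemma cauchy_term (n : ℕ) :
    ∑ k ∈ range (n + 1), aa k * aa (n - k)
      = 2 * ((∑ k ∈ Finset.Icc 1 (n + 1), (1:ℝ) / k) / (((n:ℝ) + 2) * 2 ^ (n + 2))) := by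
  have hpow : ∀ k ∈ range (n + 1),
      aa k * aa (n - k)
        = (1/2 : ℝ) ^ (n + 2) * ((1:ℝ) / (((k:ℝ) + 1) * (((n - k : ℕ) : ℝ) + 1))) := by
    intro k hk
    have hk' : k ≤ n := Nat.lt_succ_iff.mp (mem_range.mp hk)
    unfold aa
    rw [div_mul_div_comm, ← pow_add]
    have hkk : k + 1 + (n - k + 1) = n + 2 := by omega
    rw [hkk]
    rw [mul_one_div]
  rw [Finset.sum_congr rfl hpow, ← Finset.mul_sum, sum_inv_mul]
  have hIcc : ∑ k ∈ Finset.Icc 1 (n + 1), (1:ℝ) / k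
      = ∑ k ∈ range (n + 1), (1:ℝ) / ((k:ℝ) + 1) := by
    rw [← Finset.Ico_add_one_right_eq_Icc, Finset.sum_Ico_eq_sum_range]
    apply Finset.sum_congr rfl
    intro k _
    push_cast
    rw [add_comm]
  rw [hIcc]
  have h2 : ((1:ℝ)/2) ^ (n + 2) = 1 / 2 ^ (n + 2) := by
    rw [div_pow, one_pow]
  rw [h2]
  field_simp

lemma hasSum_cauchy :
    HasSum (fun n => ∑ k ∈ range (n + 1), aa k * aa (n - k)) (Real.log 2 * Real.log 2) := by
  have hsum : Summable (fun n => ∑ k ∈ range (n + 1), aa k * aa (n - k)) :=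
    (summable_norm_sum_mul_range_of_summable_norm summable_norm_aa summable_norm_aa).of_norm
  have ht : (∑' n, aa n) * (∑' n, aa n) = ∑' n, ∑ k ∈ range (n + 1), aa k * aa (n - k) :=
    tsum_mul_tsum_eq_tsum_sum_range_of_summable_norm summable_norm_aa summable_norm_aa
  rw [hasSum_aa.tsum_eq] at ht
  exact ht ▸ hsum.hasSum

noncomputable def gg (n : ℕ) : ℝ :=
  (∑ k ∈ Finset.Icc 1 n, (1:ℝ) / k) / (((n:ℝ) + 1) * 2 ^ (n + 1))

theorem stmt_10 :
    HasSum (fun n : ℕ =>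
        (∑ k ∈ Finset.Icc 1 (n + 1), (1 : ℝ) / k) / ((n + 1 : ℝ) * 2 ^ (n + 1)))
      (π ^ 2 / 12) := by
  have hg1 : HasSum (fun n : ℕ => gg (n + 1)) (Real.log 2 * Real.log 2 / 2) := by
    have h := hasSum_cauchy.div_const 2
    have heq : ∀ n : ℕ, (∑ k ∈ range (n + 1), aa k * aa (n - k)) / 2 = gg (n + 1) := by
      intro n
      rw [cauchy_term n]
      unfold gg
      push_cast
      ring
    exact (funext heq : _ = _) ▸ h
  have hg : HasSum gg (Real.log 2 * Real.log 2 / 2) := by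
    have h := (hasSum_nat_add_iff (f := gg) 1).mp hg1
    have hg0 : gg 0 = 0 := by unfold gg; simp
    simpa [hg0] using h
  have hh : HasSum (fun n : ℕ => (1/2 : ℝ) ^ (n + 1) / ((n : ℝ) + 1) ^ 2)
      (π ^ 2 / 12 - (Real.log 2) ^ 2 / 2) := by
    have h := hasSum_li2 (x := 1/2) (by norm_num) (by norm_num)
    rwa [li2_half] at h
  have hsum := hg.add hh
  have hfun : ∀ n : ℕ,
      gg n + (1/2 : ℝ) ^ (n + 1) / ((n : ℝ) + 1) ^ 2
        = (∑ k ∈ Finset.Icc 1 (n + 1), (1 : ℝ) / k) / ((n + 1 : ℝ) * 2 ^ (n + 1)) := by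
    intro n
    unfold gg
    rw [Finset.sum_Icc_succ_top (by omega : 1 ≤ n + 1)]
    have h1 : ((n:ℝ) + 1) ≠ 0 := by positivity
    have h2 : (2:ℝ) ^ (n + 1) ≠ 0 := by positivity
    push_cast
    rw [div_pow, one_pow]
    field_simp
  have hfin : HasSum (fun n : ℕ =>
      (∑ k ∈ Finset.Icc 1 (n + 1), (1 : ℝ) / k) / ((n + 1 : ℝ) * 2 ^ (n + 1)))
      (Real.log 2 * Real.log 2 / 2 + (π ^ 2 / 12 - (Real.log 2) ^ 2 / 2)) := by
    exact (funext hfun : _ = _) ▸ hsum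
  convert hfin using 1
  ring
end

section
/- The series ∑_{n=1}^∞ (H_n)²/n² converges and equals 17π⁴/360. -/
open Finset Real Filter Topology

set_option maxHeartbeats 1000000

noncomputable def H (m : ℕ) : ℝ := ∑ k ∈ Finset.Icc 1 m, (1:ℝ)/k
noncomputable def H2 (m : ℕ) : ℝ := ∑ k ∈ Finset.Icc 1 m, (1:ℝ)/(k:ℝ)^2

lemma H_zero : H 0 = 0 := by simp [H]
lemma H_succ (m : ℕ) : H (m+1) = H m + 1/(m+1) := by
  rw [H, H, Finset.sum_Icc_succ_top (by omega)]
  push_cast; ring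
lemma H2_succ (m : ℕ) : H2 (m+1) = H2 m + 1/((m:ℝ)+1)^2 := by
  rw [H2, H2, Finset.sum_Icc_succ_top (by omega)]
  push_cast; ring
lemma H_nonneg (m : ℕ) : 0 ≤ H m := by
  apply Finset.sum_nonneg; intro k _; positivity
lemma H_eq_range (m : ℕ) : H m = ∑ k ∈ Finset.range m, (1:ℝ)/(k+1) := by
  induction m with
  | zero => simp [H_zero]
  | succ n ih =>
    rw [H_succ, Finset.sum_range_succ, ih]

lemma H_sub_eq (N m : ℕ) : H (N + m) - H N = ∑ n ∈ Finset.range m, (1:ℝ)/(N+n+1) := by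
  rw [H_eq_range, H_eq_range, Finset.sum_range_add, add_sub_cancel_left]
  apply Finset.sum_congr rfl
  intro n _
  push_cast
  ring_nf

lemma H_sub_nonneg (N m : ℕ) : 0 ≤ H (N + m) - H N := by
  rw [H_sub_eq]; apply Finset.sum_nonneg; intro k _; positivity

lemma H_sub_le (N m : ℕ) : H (N + m) - H N ≤ m / ((N:ℝ)+1) := by
  rw [H_sub_eq]
  calc ∑ n ∈ Finset.range m, (1:ℝ)/((N:ℝ)+n+1) ≤ ∑ n ∈ Finset.range m, (1:ℝ)/(N+1) := by
        apply Finset.sum_le_sum; intro k hk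
        apply one_div_le_one_div_of_le (by positivity)
        have : (0:ℝ) ≤ k := Nat.cast_nonneg k
        linarith
    _ = m / ((N:ℝ)+1) := by rw [Finset.sum_const, Finset.card_range]; ring

/-- Telescoping: ∑_{n≥0} 1/((n+1)(n+1+M)) = H M / M for M = m+1. -/
lemma hasSum_telescope (m : ℕ) :
    HasSum (fun n : ℕ => 1/(((n:ℝ)+1)*((n:ℝ)+(m:ℝ)+2))) (H (m+1) / ((m:ℝ)+1)) := by
  have hnn : ∀ n : ℕ, (0:ℝ) ≤ 1/(((n:ℝ)+1)*((n:ℝ)+(m:ℝ)+2)) := fun n => by positivity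
  rw [hasSum_iff_tendsto_nat_of_nonneg hnn]
  have hps : ∀ N : ℕ, ∑ n ∈ Finset.range N, 1/(((n:ℝ)+1)*((n:ℝ)+(m:ℝ)+2))
      = (1/((m:ℝ)+1)) * (H (m+1) - (H (N + (m+1)) - H N)) := by
    intro N
    have step : ∀ n : ℕ, 1/(((n:ℝ)+1)*((n:ℝ)+(m:ℝ)+2))
        = (1/((m:ℝ)+1)) * (1/((n:ℝ)+1) - 1/((n:ℝ)+(m:ℝ)+2)) := by
      intro n
      have h1 : ((n:ℝ)+1) ≠ 0 := by positivity
      have h2 : ((n:ℝ)+(m:ℝ)+2) ≠ 0 := by positivity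
      have h3 : ((m:ℝ)+1) ≠ 0 := by positivity
      field_simp
      ring
    simp_rw [step, ← Finset.mul_sum]
    congr 1
    rw [Finset.sum_sub_distrib, ← H_eq_range]
    have e2 : ∑ n ∈ Finset.range N, 1/((n:ℝ)+(m:ℝ)+2) = H (N + (m+1)) - H (m+1) := by
      rw [show N + (m+1) = (m+1) + N from by omega, H_sub_eq (m+1) N]
      apply Finset.sum_congr rfl
      intro n _
      push_cast
      ring_nf
    rw [e2]; ring
  simp_rw [hps]
  have hlim : Tendsto (fun N : ℕ => H (N + (m+1)) - H N) atTop (𝓝 0) := by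
    apply squeeze_zero (fun N => H_sub_nonneg N (m+1)) (fun N => H_sub_le N (m+1))
    have := tendsto_one_div_add_atTop_nhds_zero_nat (𝕜 := ℝ)
    have h2 : Tendsto (fun N : ℕ => ((m:ℝ)+1) * (1/((N:ℝ)+1))) atTop (𝓝 (((m:ℝ)+1) * 0)) :=
      this.const_mul _
    simp only [mul_zero] at h2
    convert h2 using 2 with N
    push_cast
    ring
  have : Tendsto (fun N : ℕ => (1/((m:ℝ)+1)) * (H (m+1) - (H (N + (m+1)) - H N))) atTop
      (𝓝 ((1/((m:ℝ)+1)) * (H (m+1) - 0))) := by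
    exact ((hlim.const_sub _).const_mul _)
  simpa [one_div, sub_zero, div_eq_mul_inv, mul_comm] using this

lemma zeta2' : HasSum (fun n : ℕ => 1/((n:ℝ)+1)^2) (π^2/6) := by
  have h := (hasSum_nat_add_iff (f := fun n : ℕ => (1:ℝ)/(n:ℝ)^2) 1).mpr
    (by simpa using hasSum_zeta_two)
  simpa using h

lemma zeta4' : HasSum (fun n : ℕ => 1/((n:ℝ)+1)^4) (π^4/90) := by
  have h := (hasSum_nat_add_iff (f := fun n : ℕ => (1:ℝ)/(n:ℝ)^4) 1).mpr
    (by simpa using hasSum_zeta_four)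
  simpa using h

lemma H_le (m : ℕ) : H m ≤ m := by
  induction m with
  | zero => simp [H_zero]
  | succ n ih =>
    rw [H_succ]
    have : 1/((n:ℝ)+1) ≤ 1 := by
      rw [div_le_one (by positivity)]; linarith [Nat.cast_nonneg (α := ℝ) n]
    push_cast
    linarith

lemma H2_le (m : ℕ) : H2 m ≤ 2 := by
  have key : ∀ n : ℕ, H2 (n+1) ≤ 2 - 1/((n:ℝ)+1) := by
    intro n
    induction n with
    | zero => rw [H2_succ]; norm_num [H2]
    | succ k ih =>
      rw [H2_succ]
      have hk : (0:ℝ) < (k:ℝ)+1 := by positivity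
      have hk2 : (0:ℝ) < (k:ℝ)+2 := by positivity
      have key2 : 1/((k:ℝ)+2)^2 ≤ 1/((k:ℝ)+1) - 1/((k:ℝ)+2) := by
        rw [div_sub_div _ _ (ne_of_gt hk) (ne_of_gt hk2)]
        rw [div_le_div_iff₀ (by positivity) (by positivity)]
        nlinarith
      push_cast at key2 ⊢
      ring_nf at ih key2 ⊢
      linarith
  cases m with
  | zero => norm_num [H2]
  | succ n =>
    have := key n
    have : (0:ℝ) < 1/((n:ℝ)+1) := by positivity
    linarith [key n]

lemma H_le_log (m : ℕ) : H (m+1) ≤ 1 + Real.log ((m:ℝ)+1) := by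
  have hh : H (m+1) = ((harmonic (m+1) : ℚ) : ℝ) := by
    rw [H_eq_range, harmonic]
    push_cast
    apply Finset.sum_congr rfl
    intro k _
    rw [one_div]
  rw [hh]
  exact_mod_cast harmonic_le_one_add_log (m+1)

lemma summable_shift32 : Summable (fun n : ℕ => 16/((n:ℝ)+1)^((3:ℝ)/2)) := by
  have h1 : Summable (fun n : ℕ => 1/(n:ℝ)^((3:ℝ)/2)) :=
    Real.summable_one_div_nat_rpow.mpr (by norm_num)
  have h2 := (summable_nat_add_iff (f := fun n : ℕ => 1/(n:ℝ)^((3:ℝ)/2)) 1).mpr h1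
  have h3 : Summable (fun n : ℕ => 1/((n:ℝ)+1)^((3:ℝ)/2)) :=
    h2.congr (fun n => by push_cast; rfl)
  exact (h3.mul_left 16).congr (fun n => by ring)

lemma log_sq_bound (m : ℕ) : (1 + Real.log ((m:ℝ)+1))^2 ≤ 16*((m:ℝ)+1)^((1:ℝ)/2) := by
  set x : ℝ := (m:ℝ)+1 with hx
  have hx1 : (1:ℝ) ≤ x := by simp [hx]
  have hx0 : (0:ℝ) < x := by linarith
  have hq : (0:ℝ) < x^((1:ℝ)/4) := Real.rpow_pos_of_pos hx0 _
  have hlog : Real.log x ≤ 4*x^((1:ℝ)/4) - 4 := by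
    have h := Real.log_le_sub_one_of_pos hq
    rw [Real.log_rpow hx0] at h
    linarith
  have h1 : 1 + Real.log x ≤ 4*x^((1:ℝ)/4) := by linarith [hq]
  have h0 : (0:ℝ) ≤ 1 + Real.log x := by
    have := Real.log_nonneg hx1
    linarith
  calc (1 + Real.log x)^2 ≤ (4*x^((1:ℝ)/4))^2 := by
        apply pow_le_pow_left₀ h0 h1
    _ = 16*(x^((1:ℝ)/4))^2 := by ring
    _ = 16*x^((1:ℝ)/2) := by
        rw [← Real.rpow_natCast (x^((1:ℝ)/4)) 2, ← Real.rpow_mul (le_of_lt hx0)]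
        norm_num

lemma summable_A : Summable (fun n : ℕ => H (n+1)^2/((n:ℝ)+1)^2) := by
  apply Summable.of_nonneg_of_le (fun n => by positivity) _ summable_shift32
  intro n
  have hx0 : (0:ℝ) < (n:ℝ)+1 := by positivity
  have h1 : H (n+1)^2 ≤ 16*((n:ℝ)+1)^((1:ℝ)/2) := by
    calc H (n+1)^2 ≤ (1 + Real.log ((n:ℝ)+1))^2 := by
          apply pow_le_pow_left₀ (H_nonneg _) (H_le_log n)
      _ ≤ 16*((n:ℝ)+1)^((1:ℝ)/2) := log_sq_bound n
  rw [div_le_div_iff₀ (by positivity) (Real.rpow_pos_of_pos hx0 _)]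
  calc H (n+1)^2 * ((n:ℝ)+1)^((3:ℝ)/2) ≤ 16*((n:ℝ)+1)^((1:ℝ)/2) * ((n:ℝ)+1)^((3:ℝ)/2) := by
        apply mul_le_mul_of_nonneg_right h1 (le_of_lt (Real.rpow_pos_of_pos hx0 _))
    _ = 16 * ((n:ℝ)+1)^2 := by
        rw [mul_assoc, ← Real.rpow_add hx0,
          show ((1:ℝ)/2 + 3/2) = ((2:ℕ):ℝ) by norm_num, Real.rpow_natCast]

lemma summable_B : Summable (fun n : ℕ => H (n+1)/((n:ℝ)+1)^3) := by
  apply Summable.of_nonneg_of_le (fun n => div_nonneg (H_nonneg _) (by positivity)) _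
    (zeta2'.summable)
  intro n
  have h1 : H (n+1) ≤ (n:ℝ)+1 := by have := H_le (n+1); push_cast at this; linarith
  rw [div_le_div_iff₀ (by positivity) (by positivity)]
  calc H (n+1) * ((n:ℝ)+1)^2 ≤ ((n:ℝ)+1) * ((n:ℝ)+1)^2 := by
        apply mul_le_mul_of_nonneg_right h1 (by positivity)
    _ = 1 * ((n:ℝ)+1)^3 := by ring

lemma H2_nonneg (m : ℕ) : 0 ≤ H2 m :=
  Finset.sum_nonneg (fun k _ => by positivity)

lemma summable_C : Summable (fun n : ℕ => H2 (n+1)/((n:ℝ)+1)^2) := by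
  apply Summable.of_nonneg_of_le (fun n => div_nonneg (H2_nonneg _) (by positivity)) _
    (zeta2'.summable.mul_left 2)
  intro n
  have h' : (0:ℝ) < ((n:ℝ)+1)^2 := by positivity
  rw [div_le_iff₀ h']
  calc H2 (n+1) ≤ 2 := H2_le (n+1)
    _ = 2*(1/((n:ℝ)+1)^2)*((n:ℝ)+1)^2 := by field_simp

lemma H2_eq_range (m : ℕ) : H2 m = ∑ k ∈ Finset.range m, (1:ℝ)/((k:ℝ)+1)^2 := by
  induction m with
  | zero => simp [H2]
  | succ n ih => rw [H2_succ, Finset.sum_range_succ, ih]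

lemma hasSum_prod_of_nonneg {f : ℕ×ℕ → ℝ} (hnn : ∀ p, 0 ≤ f p)
    {g : ℕ → ℝ} (hrow : ∀ m, HasSum (fun n => f (m,n)) (g m))
    {S : ℝ} (hg : HasSum g S) : HasSum f S := by
  have hsf : Summable f := (summable_prod_of_nonneg (by intro p; exact hnn p)).mpr
    ⟨fun m => (hrow m).summable, hg.summable.congr (fun m => ((hrow m).tsum_eq).symm)⟩
  have h2 : HasSum g (∑' p, f p) := hsf.hasSum.prod_fiberwise hrow
  have h3 := hsf.hasSum
  rwa [h2.unique hg] at h3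

lemma hasSum_swap {f : ℕ×ℕ → ℝ} {S : ℝ} (h : HasSum f S) :
    HasSum (fun p : ℕ×ℕ => f (p.2, p.1)) S :=
  (Equiv.prodComm ℕ ℕ).hasSum_iff.mpr h

lemma hasSum_ite_range (k : ℕ) (g : ℕ → ℝ) :
    HasSum (fun j => if j < k then g j else 0) (∑ j ∈ Finset.range k, g j) := by
  have h := hasSum_sum_of_ne_finset_zero (s := Finset.range k) (L := SummationFilter.unconditional ℕ)
      (f := fun j => if j < k then g j else 0)
      (fun b hb => if_neg (by simpa using hb))
  have e : ∑ j ∈ Finset.range k, (if j < k then g j else 0) = ∑ j ∈ Finset.range k, g j :=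
    Finset.sum_congr rfl (fun j hj => if_pos (Finset.mem_range.mp hj))
  rwa [e] at h

/-- The double zeta(2) product sum. -/
lemma hasSum_full :
    HasSum (fun p : ℕ×ℕ => (1/((p.1:ℝ)+1)^2) * (1/((p.2:ℝ)+1)^2)) (π^4/36) := by
  have h2 := hasSum_prod_of_nonneg (f := fun p : ℕ×ℕ => (1/((p.1:ℝ)+1)^2) * (1/((p.2:ℝ)+1)^2))
    (fun p => by positivity)
    (fun m => zeta2'.mul_left (1/((m:ℝ)+1)^2)) (zeta2'.mul_right (π^2/6))
  rwa [show (π^2/6)*(π^2/6) = π^4/36 by ring] at h2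

lemma hasSum_C : HasSum (fun k : ℕ => H2 (k+1)/((k:ℝ)+1)^2) (7*π^4/360) := by
  obtain ⟨Cv, hC0⟩ := summable_C
  have hq : HasSum (fun p : ℕ×ℕ =>
      if p.2 < p.1 + 1 then (1/((p.2:ℝ)+1)^2) * (1/((p.1:ℝ)+1)^2) else 0) Cv := by
    apply hasSum_prod_of_nonneg
    · intro p; split
      · positivity
      · exact le_refl 0
    · intro k
      have h := hasSum_ite_range (k+1) (fun j => (1/((j:ℝ)+1)^2) * (1/((k:ℝ)+1)^2))
      have e : ∑ j ∈ Finset.range (k+1), (1/((j:ℝ)+1)^2) * (1/((k:ℝ)+1)^2)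
          = H2 (k+1)/((k:ℝ)+1)^2 := by
        rw [← Finset.sum_mul, ← H2_eq_range]; ring
      rwa [e] at h
    · exact hC0
  have hinj : Function.Injective (fun k : ℕ => ((k,k) : ℕ×ℕ)) := by
    intro a b hab
    simpa using congrArg Prod.fst hab
  have hd : HasSum (fun p : ℕ×ℕ =>
      if p.2 = p.1 then (1/((p.2:ℝ)+1)^2) * (1/((p.1:ℝ)+1)^2) else 0) (π^4/90) := by
    have hsupp : ∀ p : ℕ×ℕ, p ∉ Set.range (fun k : ℕ => ((k,k) : ℕ×ℕ)) →
        (if p.2 = p.1 then (1/((p.2:ℝ)+1)^2) * (1/((p.1:ℝ)+1)^2) else 0) = 0 := by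
      intro p hp
      apply if_neg
      intro h
      exact hp ⟨p.1, by rw [Prod.ext_iff]; exact ⟨rfl, h.symm⟩⟩
    rw [← Function.Injective.hasSum_iff hinj hsupp]
    have e : (fun k : ℕ =>
        (fun p : ℕ×ℕ => if p.2 = p.1 then (1/((p.2:ℝ)+1)^2) * (1/((p.1:ℝ)+1)^2) else 0)
          ((fun k : ℕ => ((k,k) : ℕ×ℕ)) k)) = fun k : ℕ => 1/((k:ℝ)+1)^4 := by
      funext k
      simp only [if_pos rfl]
      rw [div_mul_div_comm, one_mul, ← pow_add]
      norm_num
    rw [show ((fun p : ℕ×ℕ => if p.2 = p.1 then (1/((p.2:ℝ)+1)^2) * (1/((p.1:ℝ)+1)^2) else 0)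
        ∘ (fun k : ℕ => ((k,k) : ℕ×ℕ))) = fun k : ℕ => 1/((k:ℝ)+1)^4 from e]
    exact zeta4'
  have hqs : HasSum (fun p : ℕ×ℕ =>
      if p.2 < p.1 then (1/((p.2:ℝ)+1)^2) * (1/((p.1:ℝ)+1)^2) else 0) (Cv - π^4/90) := by
    have h := hq.sub hd
    have e : (fun p : ℕ×ℕ =>
        if p.2 < p.1 then (1/((p.2:ℝ)+1)^2) * (1/((p.1:ℝ)+1)^2) else 0)
        = fun p : ℕ×ℕ =>
          (if p.2 < p.1 + 1 then (1/((p.2:ℝ)+1)^2) * (1/((p.1:ℝ)+1)^2) else 0)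
          - (if p.2 = p.1 then (1/((p.2:ℝ)+1)^2) * (1/((p.1:ℝ)+1)^2) else 0) := by
      funext p
      rcases lt_trichotomy p.2 p.1 with h'|h'|h'
      · rw [if_pos h', if_pos (by omega), if_neg (by omega)]; ring
      · rw [if_neg (by omega), if_pos (by omega), if_pos h']; ring
      · rw [if_neg (by omega), if_neg (by omega), if_neg (by omega)]; ring
    rw [e]; exact h
  have hqs' : HasSum (fun p : ℕ×ℕ =>
      if p.1 < p.2 then (1/((p.1:ℝ)+1)^2) * (1/((p.2:ℝ)+1)^2) else 0) (Cv - π^4/90) :=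
    hasSum_swap hqs
  have hsplit : (fun p : ℕ×ℕ => (1/((p.1:ℝ)+1)^2) * (1/((p.2:ℝ)+1)^2))
      = fun p : ℕ×ℕ =>
        (if p.2 < p.1 + 1 then (1/((p.2:ℝ)+1)^2) * (1/((p.1:ℝ)+1)^2) else 0)
        + (if p.1 < p.2 then (1/((p.1:ℝ)+1)^2) * (1/((p.2:ℝ)+1)^2) else 0) := by
    funext p
    rcases le_or_gt p.2 p.1 with h'|h'
    · rw [if_pos (by omega), if_neg (by omega)]; ring
    · rw [if_neg (by omega), if_pos h']; ring
  have hsum2 : HasSum (fun p : ℕ×ℕ => (1/((p.1:ℝ)+1)^2) * (1/((p.2:ℝ)+1)^2))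
      (Cv + (Cv - π^4/90)) := by rw [hsplit]; exact hq.add hqs'
  have huniq := hasSum_full.unique hsum2
  have : Cv = 7*π^4/360 := by linarith
  rwa [this] at hC0

lemma hasSum_B : HasSum (fun m : ℕ => H (m+1)/((m:ℝ)+1)^3) (π^4/72) := by
  obtain ⟨Bv, hB0⟩ := summable_B
  have hrow : ∀ m : ℕ, HasSum (fun n : ℕ =>
      (1/((m:ℝ)+1)^2) * (1/(((n:ℝ)+1)*((n:ℝ)+(m:ℝ)+2)))) (H (m+1)/((m:ℝ)+1)^3) := by
    intro m
    have h := (hasSum_telescope m).mul_left (1/((m:ℝ)+1)^2)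
    have e : (1/((m:ℝ)+1)^2) * (H (m+1) / ((m:ℝ)+1)) = H (m+1)/((m:ℝ)+1)^3 := by
      rw [div_mul_div_comm, one_mul, show ((m:ℝ)+1)^2*((m:ℝ)+1) = ((m:ℝ)+1)^3 from by ring]
    rwa [e] at h
  have hP : HasSum (fun p : ℕ×ℕ =>
      (1/((p.1:ℝ)+1)^2) * (1/(((p.2:ℝ)+1)*((p.2:ℝ)+(p.1:ℝ)+2)))) Bv :=
    hasSum_prod_of_nonneg (fun p => by positivity) (fun m => hrow m) hB0
  have hP' := hasSum_swap hP
  have hsplit : (fun p : ℕ×ℕ => (1/((p.1:ℝ)+1)^2) * (1/((p.2:ℝ)+1)^2))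
      = fun p : ℕ×ℕ =>
        ((1/((p.1:ℝ)+1)^2) * (1/(((p.2:ℝ)+1)*((p.2:ℝ)+(p.1:ℝ)+2))))
        + ((1/((p.2:ℝ)+1)^2) * (1/(((p.1:ℝ)+1)*((p.1:ℝ)+(p.2:ℝ)+2)))) := by
    funext p
    have h1 : ((p.1:ℝ)+1) ≠ 0 := by positivity
    have h2 : ((p.2:ℝ)+1) ≠ 0 := by positivity
    have h3 : ((p.2:ℝ)+(p.1:ℝ)+2) ≠ 0 := by positivity
    have h4 : ((p.1:ℝ)+(p.2:ℝ)+2) ≠ 0 := by positivity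
    field_simp
    ring
  have hsum2 : HasSum (fun p : ℕ×ℕ => (1/((p.1:ℝ)+1)^2) * (1/((p.2:ℝ)+1)^2))
      (Bv + Bv) := by rw [hsplit]; exact hP.add hP'
  have huniq := hasSum_full.unique hsum2
  have : Bv = π^4/72 := by linarith
  rwa [this] at hB0

lemma FI1 (k : ℕ) : ∑ m ∈ Finset.range k, H (m+1)/((m:ℝ)+1)
    = (H (k+1)^2 + H2 (k+1))/2 - H (k+1)/((k:ℝ)+1) := by
  induction k with
  | zero => norm_num [H_succ, H2_succ, H_zero, H2]
  | succ k ih =>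
    rw [Finset.sum_range_succ, ih, H_succ (k+1), H2_succ (k+1)]
    have hk1 : ((k:ℝ)+1) ≠ 0 := by positivity
    have hk2 : ((k:ℝ)+1+1) ≠ 0 := by positivity
    push_cast
    field_simp
    ring

lemma FI2'' (k : ℕ) : ∑ r ∈ Finset.range (k+1), 2*H r/((r:ℝ)+1) = H (k+1)^2 - H2 (k+1) := by
  induction k with
  | zero => norm_num [H_succ, H2_succ, H_zero, H2]
  | succ k ih =>
    rw [Finset.sum_range_succ, ih, H_succ (k+1), H2_succ (k+1)]
    have hk2 : ((k:ℝ)+2) ≠ 0 := by positivity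
    push_cast
    field_simp
    ring

lemma inner_reflect (r : ℕ) : ∑ j ∈ Finset.range r, (1:ℝ)/((r:ℝ)-(j:ℝ)) = H r := by
  rw [H_eq_range, ← Finset.sum_range_reflect (fun j => (1:ℝ)/((j:ℝ)+1)) r]
  apply Finset.sum_congr rfl
  intro j hj
  have hjr : j < r := Finset.mem_range.mp hj
  rw [show r - 1 - j = r - (j+1) from by omega, Nat.cast_sub (show j+1 ≤ r from hjr)]
  push_cast
  ring_nf

lemma inner_pf (r : ℕ) :
    ∑ j ∈ Finset.range r, (1/((j:ℝ)+1))*(1/((r:ℝ)-(j:ℝ))) = 2*H r/((r:ℝ)+1) := by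
  have key : ∀ j ∈ Finset.range r, (1/((j:ℝ)+1))*(1/((r:ℝ)-(j:ℝ)))
      = (1/((r:ℝ)+1)) * (1/((j:ℝ)+1) + 1/((r:ℝ)-(j:ℝ))) := by
    intro j hj
    have hjr : j < r := Finset.mem_range.mp hj
    have h1 : ((j:ℝ)+1) ≠ 0 := by positivity
    have h3 : ((r:ℝ)+1) ≠ 0 := by positivity
    have h2 : (r:ℝ)-(j:ℝ) > 0 := by
      have : (j:ℝ) < r := by exact_mod_cast hjr
      linarith
    field_simp
    ring
  rw [Finset.sum_congr rfl key, ← Finset.mul_sum, Finset.sum_add_distrib, inner_reflect,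
    ← H_eq_range]
  ring

lemma FI2 (k : ℕ) : ∑ m ∈ Finset.range k, H (m+1)/((k:ℝ)-(m:ℝ)) = H (k+1)^2 - H2 (k+1) := by
  have lhs2 : ∑ m ∈ Finset.range k, H (m+1)/((k:ℝ)-(m:ℝ))
      = ∑ x ∈ (Finset.range k).sigma (fun m => Finset.range (m+1)),
          (1/((x.2:ℝ)+1))*(1/((k:ℝ)-(x.1:ℝ))) := by
    rw [Finset.sum_sigma]
    apply Finset.sum_congr rfl
    intro m _
    rw [H_eq_range, Finset.sum_div]
    apply Finset.sum_congr rfl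
    intro j _
    ring
  have rhs2 : ∑ r ∈ Finset.range (k+1), 2*H r/((r:ℝ)+1)
      = ∑ y ∈ (Finset.range (k+1)).sigma (fun r => Finset.range r),
          (1/((y.2:ℝ)+1))*(1/((y.1:ℝ)-(y.2:ℝ))) := by
    rw [Finset.sum_sigma]
    apply Finset.sum_congr rfl
    intro r _
    exact (inner_pf r).symm
  have bij : ∑ x ∈ (Finset.range k).sigma (fun m => Finset.range (m+1)),
        (1/((x.2:ℝ)+1))*(1/((k:ℝ)-(x.1:ℝ)))
      = ∑ y ∈ (Finset.range (k+1)).sigma (fun r => Finset.range r),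
        (1/((y.2:ℝ)+1))*(1/((y.1:ℝ)-(y.2:ℝ))) := by
    apply Finset.sum_nbij' (i := fun x : (_ : ℕ) × ℕ => (⟨x.2 + (k - x.1), x.2⟩ : (_ : ℕ) × ℕ))
      (j := fun y : (_ : ℕ) × ℕ => (⟨k + y.2 - y.1, y.2⟩ : (_ : ℕ) × ℕ))
    · rintro ⟨m, j⟩ ha
      simp only [Finset.mem_sigma, Finset.mem_range] at ha ⊢
      omega
    · rintro ⟨r, j⟩ hb
      simp only [Finset.mem_sigma, Finset.mem_range] at hb ⊢
      omega
    · rintro ⟨m, j⟩ ha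
      simp only [Finset.mem_sigma, Finset.mem_range] at ha
      simp only [Sigma.mk.inj_iff, heq_eq_eq, and_true]
      omega
    · rintro ⟨r, j⟩ hb
      simp only [Finset.mem_sigma, Finset.mem_range] at hb
      simp only [Sigma.mk.inj_iff, heq_eq_eq, and_true]
      omega
    · rintro ⟨m, j⟩ ha
      simp only [Finset.mem_sigma, Finset.mem_range] at ha
      have h1 : (((j + (k - m)) : ℕ) : ℝ) = (j:ℝ) + (k:ℝ) - (m:ℝ) := by
        have : m ≤ k := by omega
        push_cast [Nat.cast_sub this]
        ring
      simp only [h1]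
      ring_nf
  rw [lhs2, bij, ← rhs2, FI2'']

lemma summable_tail (m : ℕ) : Summable (fun i : ℕ => 1/((m:ℝ)+(i:ℝ)+2)^2) := by
  have h := (summable_nat_add_iff (f := fun n : ℕ => 1/((n:ℝ)+1)^2) (m+1)).mpr zeta2'.summable
  exact h.congr (fun i => by push_cast; ring_nf)

noncomputable def tl (m : ℕ) : ℝ := ∑' i : ℕ, 1/((m:ℝ)+(i:ℝ)+2)^2

lemma hasSum_tail (m : ℕ) : HasSum (fun i : ℕ => 1/((m:ℝ)+(i:ℝ)+2)^2) (tl m) :=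
  (summable_tail m).hasSum

lemma hasSum_rowF2 (m : ℕ) :
    HasSum (fun i : ℕ => H (m+1) * (1/(((i:ℝ)+1)*((m:ℝ)+(i:ℝ)+2)^2)))
      (H (m+1) * (H (m+1)/((m:ℝ)+1)^2 - tl m/((m:ℝ)+1))) := by
  have base := ((hasSum_telescope m).mul_left (1/((m:ℝ)+1))).sub
    ((hasSum_tail m).mul_left (1/((m:ℝ)+1)))
  have e : (fun i : ℕ => (1/((m:ℝ)+1)) * (1/(((i:ℝ)+1)*((i:ℝ)+(m:ℝ)+2)))
        - (1/((m:ℝ)+1)) * (1/((m:ℝ)+(i:ℝ)+2)^2))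
      = fun i : ℕ => 1/(((i:ℝ)+1)*((m:ℝ)+(i:ℝ)+2)^2) := by
    funext i
    have h1 : ((i:ℝ)+1) ≠ 0 := by positivity
    have h2 : ((m:ℝ)+(i:ℝ)+2) ≠ 0 := by positivity
    have h3 : ((m:ℝ)+1) ≠ 0 := by positivity
    rw [show (i:ℝ)+(m:ℝ)+2 = (m:ℝ)+(i:ℝ)+2 from by ring]
    field_simp
    ring
  rw [e] at base
  have base2 := base.mul_left (H (m+1))
  have e2 : H (m+1) * ((1/((m:ℝ)+1)) * (H (m+1)/((m:ℝ)+1)) - (1/((m:ℝ)+1)) * tl m)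
      = H (m+1) * (H (m+1)/((m:ℝ)+1)^2 - tl m/((m:ℝ)+1)) := by
    have h3 : ((m:ℝ)+1) ≠ 0 := by positivity
    field_simp
  rw [e2] at base2
  exact base2

theorem main : HasSum (fun n : ℕ => H (n+1)^2/((n:ℝ)+1)^2) (17*π^4/360) := by
  obtain ⟨Av, hA0⟩ := summable_A
  -- F2 double sum, order 1
  have hrow1 : ∀ k : ℕ, HasSum
      (fun mm : ℕ => if mm < k then H (mm+1) * (1/(((k:ℝ)-(mm:ℝ))*((k:ℝ)+1)^2)) else 0)
      ((H (k+1)^2 - H2 (k+1))/((k:ℝ)+1)^2) := by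
    intro k
    have h := hasSum_ite_range k (fun mm => H (mm+1) * (1/(((k:ℝ)-(mm:ℝ))*((k:ℝ)+1)^2)))
    have e : ∑ mm ∈ Finset.range k, H (mm+1) * (1/(((k:ℝ)-(mm:ℝ))*((k:ℝ)+1)^2))
        = (H (k+1)^2 - H2 (k+1))/((k:ℝ)+1)^2 := by
      rw [← FI2 k, Finset.sum_div]
      apply Finset.sum_congr rfl
      intro mm hmm
      have hlt : (mm:ℝ) < k := by exact_mod_cast Finset.mem_range.mp hmm
      have hne : (k:ℝ)-(mm:ℝ) ≠ 0 := by linarith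
      have hk : ((k:ℝ)+1) ≠ 0 := by positivity
      field_simp
    rwa [e] at h
  have houter1 : HasSum (fun k : ℕ => (H (k+1)^2 - H2 (k+1))/((k:ℝ)+1)^2)
      (Av - 7*π^4/360) := by
    have h := hA0.sub hasSum_C
    have e : (fun k : ℕ => H (k+1)^2/((k:ℝ)+1)^2 - H2 (k+1)/((k:ℝ)+1)^2)
        = fun k : ℕ => (H (k+1)^2 - H2 (k+1))/((k:ℝ)+1)^2 := by
      funext k; rw [div_sub_div_same]
    rwa [e] at h
  have hF2 : HasSum (fun p : ℕ×ℕ =>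
      if p.2 < p.1 then H (p.2+1) * (1/(((p.1:ℝ)-(p.2:ℝ))*((p.1:ℝ)+1)^2)) else 0)
      (Av - 7*π^4/360) := by
    have hnn : ∀ p : ℕ×ℕ, 0 ≤ (if p.2 < p.1 then
        H (p.2+1) * (1/(((p.1:ℝ)-(p.2:ℝ))*((p.1:ℝ)+1)^2)) else 0) := by
      intro p
      split
      · rename_i hlt
        have hlt' : (p.2:ℝ) < p.1 := by exact_mod_cast hlt
        apply mul_nonneg (H_nonneg _)
        apply div_nonneg zero_le_one
        apply mul_nonneg (by linarith) (by positivity)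
      · exact le_refl 0
    exact hasSum_prod_of_nonneg hnn (fun k => hrow1 k) houter1
  -- F2 order 2 (swapped), rows
  have hF2' := hasSum_swap hF2
  have hrow2 : ∀ m : ℕ, HasSum
      (fun k' : ℕ => if m < k' then H (m+1) * (1/(((k':ℝ)-(m:ℝ))*((k':ℝ)+1)^2)) else 0)
      (H (m+1) * (H (m+1)/((m:ℝ)+1)^2 - tl m/((m:ℝ)+1))) := by
    intro m
    have hinj : Function.Injective (fun i : ℕ => i + (m+1)) := add_left_injective (m+1)
    have hsupp : ∀ k' : ℕ, k' ∉ Set.range (fun i : ℕ => i + (m+1)) →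
        (if m < k' then H (m+1) * (1/(((k':ℝ)-(m:ℝ))*((k':ℝ)+1)^2)) else 0) = 0 := by
      intro k' hk'
      apply if_neg
      intro hcon
      exact hk' ⟨k' - (m+1), by show k' - (m+1) + (m+1) = k'; omega⟩
    rw [← Function.Injective.hasSum_iff hinj hsupp]
    have e : ((fun k' : ℕ => if m < k' then H (m+1) * (1/(((k':ℝ)-(m:ℝ))*((k':ℝ)+1)^2)) else 0)
        ∘ (fun i : ℕ => i + (m+1)))
        = fun i : ℕ => H (m+1) * (1/(((i:ℝ)+1)*((m:ℝ)+(i:ℝ)+2)^2)) := by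
      funext i
      simp only [Function.comp_apply]
      rw [if_pos (by omega)]
      have c1 : (((i + (m+1)):ℕ):ℝ) = (i:ℝ) + (m:ℝ) + 1 := by push_cast; ring
      rw [c1]
      rw [show (i:ℝ)+(m:ℝ)+1-(m:ℝ) = (i:ℝ)+1 from by ring,
        show (i:ℝ)+(m:ℝ)+1+1 = (m:ℝ)+(i:ℝ)+2 from by ring]
    rw [e]
    exact hasSum_rowF2 m
  have hfib := hF2'.prod_fiberwise hrow2
  -- hfib : HasSum (fun m => H (m+1) * (H (m+1)/(m+1)^2 - tl m/(m+1))) (Av - 7π⁴/360)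
  have hT : HasSum (fun m : ℕ => (H (m+1)/((m:ℝ)+1)) * tl m) (7*π^4/360) := by
    have h := hA0.sub hfib
    have e : (fun m : ℕ => H (m+1)^2/((m:ℝ)+1)^2
          - H (m+1) * (H (m+1)/((m:ℝ)+1)^2 - tl m/((m:ℝ)+1)))
        = fun m : ℕ => (H (m+1)/((m:ℝ)+1)) * tl m := by
      funext m; ring
    have e2 : Av - (Av - 7*π^4/360) = 7*π^4/360 := by ring
    rw [e, e2] at h
    exact h
  -- G double sum, order 1
  have hrowG : ∀ k : ℕ, HasSum
      (fun mm : ℕ => if mm < k then (H (mm+1)/((mm:ℝ)+1)) * (1/((k:ℝ)+1)^2) else 0)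
      (((H (k+1)^2 + H2 (k+1))/2 - H (k+1)/((k:ℝ)+1)) * (1/((k:ℝ)+1)^2)) := by
    intro k
    have h := hasSum_ite_range k (fun mm => (H (mm+1)/((mm:ℝ)+1)) * (1/((k:ℝ)+1)^2))
    have e : ∑ mm ∈ Finset.range k, (H (mm+1)/((mm:ℝ)+1)) * (1/((k:ℝ)+1)^2)
        = ((H (k+1)^2 + H2 (k+1))/2 - H (k+1)/((k:ℝ)+1)) * (1/((k:ℝ)+1)^2) := by
      rw [← Finset.sum_mul, FI1 k]
    rwa [e] at h
  have houterG : HasSum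
      (fun k : ℕ => ((H (k+1)^2 + H2 (k+1))/2 - H (k+1)/((k:ℝ)+1)) * (1/((k:ℝ)+1)^2))
      ((Av + 7*π^4/360)/2 - π^4/72) := by
    have h := ((hA0.add hasSum_C).div_const 2).sub hasSum_B
    have e : (fun k : ℕ => (H (k+1)^2/((k:ℝ)+1)^2 + H2 (k+1)/((k:ℝ)+1)^2)/2
          - H (k+1)/((k:ℝ)+1)^3)
        = fun k : ℕ => ((H (k+1)^2 + H2 (k+1))/2 - H (k+1)/((k:ℝ)+1)) * (1/((k:ℝ)+1)^2) := by
      funext k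
      have hk : ((k:ℝ)+1) ≠ 0 := by positivity
      field_simp
    rwa [e] at h
  have hG : HasSum (fun p : ℕ×ℕ =>
      if p.2 < p.1 then (H (p.2+1)/((p.2:ℝ)+1)) * (1/((p.1:ℝ)+1)^2) else 0)
      ((Av + 7*π^4/360)/2 - π^4/72) := by
    have hnn : ∀ p : ℕ×ℕ, 0 ≤ (if p.2 < p.1 then
        (H (p.2+1)/((p.2:ℝ)+1)) * (1/((p.1:ℝ)+1)^2) else 0) := by
      intro p
      split
      · apply mul_nonneg (div_nonneg (H_nonneg _) (by positivity)) (by positivity)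
      · exact le_refl 0
    exact hasSum_prod_of_nonneg hnn (fun k => hrowG k) houterG
  have hG' := hasSum_swap hG
  have hrowG2 : ∀ m : ℕ, HasSum
      (fun k' : ℕ => if m < k' then (H (m+1)/((m:ℝ)+1)) * (1/((k':ℝ)+1)^2) else 0)
      ((H (m+1)/((m:ℝ)+1)) * tl m) := by
    intro m
    have hinj : Function.Injective (fun i : ℕ => i + (m+1)) := add_left_injective (m+1)
    have hsupp : ∀ k' : ℕ, k' ∉ Set.range (fun i : ℕ => i + (m+1)) →
        (if m < k' then (H (m+1)/((m:ℝ)+1)) * (1/((k':ℝ)+1)^2) else 0) = 0 := by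
      intro k' hk'
      apply if_neg
      intro hcon
      exact hk' ⟨k' - (m+1), by show k' - (m+1) + (m+1) = k'; omega⟩
    rw [← Function.Injective.hasSum_iff hinj hsupp]
    have e : ((fun k' : ℕ => if m < k' then (H (m+1)/((m:ℝ)+1)) * (1/((k':ℝ)+1)^2) else 0)
        ∘ (fun i : ℕ => i + (m+1)))
        = fun i : ℕ => (H (m+1)/((m:ℝ)+1)) * (1/((m:ℝ)+(i:ℝ)+2)^2) := by
      funext i
      simp only [Function.comp_apply]
      rw [if_pos (by omega)]
      have c1 : (((i + (m+1)):ℕ):ℝ) = (i:ℝ) + (m:ℝ) + 1 := by push_cast; ring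
      rw [c1, show (i:ℝ)+(m:ℝ)+1+1 = (m:ℝ)+(i:ℝ)+2 from by ring]
    rw [e]
    exact (hasSum_tail m).mul_left _
  have hfibG := hG'.prod_fiberwise hrowG2
  -- hfibG : HasSum (fun m => (H (m+1)/(m+1)) * tl m) ((Av + 7π⁴/360)/2 − π⁴/72)
  have hAval : Av = 17*π^4/360 := by
    have := hT.unique hfibG
    linarith
  rwa [hAval] at hA0

theorem stmt_13 :
    HasSum (fun n : ℕ =>
        (∑ k ∈ Finset.Icc 1 (n + 1), (1 : ℝ) / k) ^ 2 / ((n + 1 : ℝ) ^ 2))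
      (17 * π ^ 4 / 360) := by
  have h := main
  have e : (fun n : ℕ => H (n+1)^2/((n:ℝ)+1)^2)
      = fun n : ℕ => (∑ k ∈ Finset.Icc 1 (n + 1), (1 : ℝ) / k) ^ 2 / ((n + 1 : ℝ) ^ 2) := by
    funext n
    rw [H]
  rwa [e] at h
end

section
/- The series ∑_{n=1}^∞ H_n^{(2)}/n² converges and equals 7π⁴/360, where H_n^{(2)} = ∑_{k=1}^n 1/k². -/
open Finset Real

theorem stmt_14 :
    HasSum (fun n : ℕ =>
        (∑ k ∈ Finset.Icc 1 (n + 1), (1 : ℝ) / (k : ℝ) ^ 2) / ((n + 1 : ℝ) ^ 2))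
      (7 * π ^ 4 / 360) := by
  set f : ℕ → ℝ := fun n => 1 / ((n : ℝ) + 1) ^ 2 with hfdef
  have hf : HasSum f (π ^ 2 / 6) := by
    have := (hasSum_nat_add_iff' (f := fun n : ℕ => (1 : ℝ) / (n : ℝ) ^ 2) 1).2 hasSum_zeta_two
    simp only [Finset.range_one, Finset.sum_singleton, Nat.cast_zero] at this
    norm_num at this
    convert this using 2 with n
    · rfl
    simp [hfdef]
  have hf4 : HasSum (fun n => f n * f n) (π ^ 4 / 90) := by
    have := (hasSum_nat_add_iff' (f := fun n : ℕ => (1 : ℝ) / (n : ℝ) ^ 4) 1).2 hasSum_zeta_four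
    simp only [Finset.range_one, Finset.sum_singleton, Nat.cast_zero] at this
    norm_num at this
    convert this using 2 with n
    · rfl
    simp only [hfdef]
    field_simp
  have hf0 : ∀ n, 0 ≤ f n := fun n => by positivity
  set F : ℕ × ℕ → ℝ := fun p => f p.1 * f p.2 with hFdef
  have hFsummable : Summable F :=
    hf.summable.mul_of_nonneg hf.summable hf0 hf0
  have hFsum : HasSum F (π ^ 2 / 6 * (π ^ 2 / 6)) := hf.mul hf hFsummable
  -- sets
  set A : Set (ℕ × ℕ) := {p | p.2 ≤ p.1} with hA
  set B : Set (ℕ × ℕ) := {p | p.1 < p.2} with hB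
  set D : Set (ℕ × ℕ) := {p | p.1 = p.2} with hD
  have hsA : Summable (A.indicator F) := hFsummable.indicator A
  have hsB : Summable (B.indicator F) := hFsummable.indicator B
  have hsD : Summable (D.indicator F) := hFsummable.indicator D
  -- diagonal sum
  have hDsum : HasSum (D.indicator F) (π ^ 4 / 90) := by
    have hinj : Function.Injective (fun n : ℕ => ((n, n) : ℕ × ℕ)) := by
      intro a b h; exact congrArg Prod.fst h
    rw [← hinj.hasSum_iff]
    · convert hf4 using 1
      funext n
      simp [Set.indicator, hD, hFdef]
    · intro p hp
      rcases p with ⟨a, b⟩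
      have hab : a ≠ b := by
        intro h; subst h; exact hp ⟨a, rfl⟩
      simp [Set.indicator, hD, hab]
  -- split: F = indicator A + indicator B
  have hsplit : A.indicator F + B.indicator F = F := by
    funext p
    by_cases h : p.2 ≤ p.1
    · have h2 : ¬ p.1 < p.2 := not_lt.2 h
      simp [Set.indicator, hA, hB, h, h2]
    · have h2 : p.1 < p.2 := not_le.1 h
      simp [Set.indicator, hA, hB, h, h2]
  have hAB : (∑' p, A.indicator F p) + (∑' p, B.indicator F p)
      = π ^ 2 / 6 * (π ^ 2 / 6) := by
    rw [← Summable.tsum_add hsA hsB, ← hFsum.tsum_eq]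
    exact tsum_congr fun p => congrFun hsplit p
  -- symmetry: sum over A = sum over B + diagonal
  have hswap : (∑' p, A.indicator F p)
      = (∑' p, B.indicator F p) + π ^ 4 / 90 := by
    have h1 : (∑' p, A.indicator F p) = ∑' p, A.indicator F ((Equiv.prodComm ℕ ℕ) p) :=
      ((Equiv.prodComm ℕ ℕ).tsum_eq _).symm
    have h2 : ∀ p : ℕ × ℕ, A.indicator F ((Equiv.prodComm ℕ ℕ) p)
        = B.indicator F p + D.indicator F p := by
      rintro ⟨a, b⟩
      rcases lt_trichotomy a b with h | h | h
      · have h5 : a ≠ b := ne_of_lt h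
        simp [Set.indicator, hA, hB, hD, hFdef, le_of_lt h, h, h5, mul_comm]
      · subst h
        simp [Set.indicator, hA, hB, hD, hFdef, lt_irrefl]
      · have h3 : ¬ a ≤ b := not_le.2 h
        have h4 : ¬ a < b := not_lt.2 (le_of_lt h)
        have h5 : a ≠ b := ne_of_gt h
        simp [Set.indicator, hA, hB, hD, hFdef, h3, h4, h5, mul_comm]
    rw [h1, tsum_congr h2, Summable.tsum_add hsB hsD, hDsum.tsum_eq]
  have hAval : (∑' p, A.indicator F p) = 7 * π ^ 4 / 360 := by
    nlinarith [hAB, hswap]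
  have hAsum : HasSum (A.indicator F) (7 * π ^ 4 / 360) := hAval ▸ hsA.hasSum
  -- fiberwise
  refine HasSum.prod_fiberwise hAsum ?_
  intro n
  have hzero : ∀ k ∉ Finset.range (n + 1), A.indicator F (n, k) = 0 := by
    intro k hk
    have : ¬ k ≤ n := fun h => hk (Finset.mem_range.2 (Nat.lt_succ_of_le h))
    simp [Set.indicator, hA, this]
  have := hasSum_sum_of_ne_finset_zero (L := SummationFilter.unconditional ℕ) hzero
  convert this using 1
  have hval : ∑ k ∈ Finset.range (n + 1), A.indicator F (n, k)
      = ∑ k ∈ Finset.range (n + 1), f k * f n := by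
    refine Finset.sum_congr rfl fun k hk => ?_
    have hkn : k ≤ n := Nat.lt_succ_iff.1 (Finset.mem_range.1 hk)
    simp [Set.indicator, hA, hkn, hFdef, mul_comm]
  rw [hval, ← Finset.sum_mul]
  have hicc : ∑ k ∈ Finset.Icc 1 (n + 1), (1 : ℝ) / (k : ℝ) ^ 2
      = ∑ k ∈ Finset.range (n + 1), f k := by
    rw [← Finset.Ico_add_one_right_eq_Icc, Finset.sum_Ico_eq_sum_range]
    simp only [Nat.succ_sub_one, hfdef]
    refine Finset.sum_congr rfl fun k _ => ?_
    push_cast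
    ring_nf
  rw [hicc]
  have hfn : f n = 1 / ((n : ℝ) + 1) ^ 2 := rfl
  rw [hfn]
  field_simp
end

section
/- For every x in the open interval (0,1), ζ'(-1, x) − ζ'(-1, 1−x) = (1/(2π)) ∑_{n=1}^∞ sin(2πnx)/n², where ζ'(s, a) denotes the derivative of the Hurwitz zeta function ζ(s,a) with respect to s. -/
open Real


open Complex HurwitzZeta in
lemma aux_deriv_odd (a : UnitAddCircle) :
    deriv (fun s : ℂ => hurwitzZetaOdd a s) (-1) = sinZeta a 2 / (4 * π) := by
  -- F w := hurwitzZetaOdd a (1 - w); deriv F 2 = - deriv (hurwitzZetaOdd a) (-1)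
  have hdiff := differentiable_hurwitzZetaOdd a
  have hF : deriv (fun w : ℂ => hurwitzZetaOdd a (1 - w)) 2
      = -deriv (fun s : ℂ => hurwitzZetaOdd a s) (-1) := by
    have h1 : HasDerivAt (fun w : ℂ => (1 : ℂ) - w) (-1) 2 :=
      (hasDerivAt_id 2).const_sub 1
    have h2 : HasDerivAt (fun s : ℂ => hurwitzZetaOdd a s)
        (deriv (fun s : ℂ => hurwitzZetaOdd a s) (-1)) ((1:ℂ) - 2) := by
      have : ((1:ℂ) - 2) = -1 := by norm_num
      rw [this]
      exact (hdiff (-1)).hasDerivAt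
    have key : HasDerivAt (fun w : ℂ => hurwitzZetaOdd a (1 - w))
        (deriv (fun s : ℂ => hurwitzZetaOdd a s) (-1) * -1) 2 := h2.comp 2 h1
    rw [key.deriv]; ring
  -- F agrees near 2 with the functional-equation RHS
  have hEq : (fun w : ℂ => hurwitzZetaOdd a (1 - w)) =ᶠ[nhds 2]
      (fun w : ℂ => 2 * (2 * ↑π : ℂ) ^ (-w) * Complex.Gamma w *
        Complex.sin (↑π * w / 2) * sinZeta a w) := by
    have hopen : IsOpen {w : ℂ | 0 < w.re} := isOpen_lt continuous_const Complex.continuous_re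
    refine Filter.eventuallyEq_of_mem (hopen.mem_nhds (by norm_num)) ?_
    intro w hw
    refine hurwitzZetaOdd_one_sub a fun n => ?_
    intro h
    rw [h] at hw
    simp only [Set.mem_setOf_eq, Complex.neg_re, Complex.natCast_re] at hw
    linarith [Nat.cast_nonneg (α := ℝ) n]
  rw [show deriv (fun s : ℂ => hurwitzZetaOdd a s) (-1) = - deriv (fun w : ℂ =>
      hurwitzZetaOdd a (1 - w)) 2 by rw [hF]; ring, hEq.deriv_eq]
  -- compute the derivative of the RHS at 2
  have hπ : (π : ℝ) ≠ 0 := Real.pi_ne_zero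
  have hC : DifferentiableAt ℂ (fun w : ℂ => 2 * (2 * ↑π : ℂ) ^ (-w) * Complex.Gamma w) 2 := by
    refine DifferentiableAt.mul ?_ ?_
    · exact (differentiableAt_id.neg.const_cpow (Or.inl (by
        simp [Complex.ofReal_ne_zero, hπ]))).const_mul 2
    · refine Complex.differentiableAt_Gamma 2 fun m => ?_
      intro h
      have : (2:ℝ) = -(m:ℝ) := by exact_mod_cast congrArg Complex.re h
      nlinarith [Nat.cast_nonneg (α := ℝ) m]
  have hsin : HasDerivAt (fun w : ℂ => Complex.sin (↑π * w / 2))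
      (Complex.cos (↑π * 2 / 2) * (↑π / 2)) 2 := by
    have h1 : HasDerivAt (fun w : ℂ => ↑π * w / 2) ((↑π : ℂ) / 2) 2 := by
      simpa using ((hasDerivAt_id (2:ℂ)).const_mul (↑π : ℂ)).div_const 2
    exact (Complex.hasDerivAt_sin _).comp 2 h1
  have hB : HasDerivAt (fun w : ℂ => sinZeta a w) (deriv (sinZeta a) 2) 2 :=
    (differentiableAt_sinZeta a 2).hasDerivAt
  have hA := (hC.hasDerivAt.mul hsin).mul hB
  rw [show (fun w : ℂ => 2 * (2 * ↑π : ℂ) ^ (-w) * Complex.Gamma w * Complex.sin (↑π * w / 2) * sinZeta a w) = ((fun w : ℂ => 2 * (2 * ↑π : ℂ) ^ (-w) * Complex.Gamma w) * fun w : ℂ => Complex.sin (↑π * w / 2)) * (fun w : ℂ => sinZeta a w) from rfl, hA.deriv]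
  simp only [Pi.mul_apply]
  have hs0 : Complex.sin (↑π * 2 / 2) = 0 := by
    rw [show (↑π * 2 / 2 : ℂ) = (↑π : ℂ) by ring, ← Complex.ofReal_sin, Real.sin_pi,
      Complex.ofReal_zero]
  have hc0 : Complex.cos (↑π * 2 / 2) = -1 := by
    rw [show (↑π * 2 / 2 : ℂ) = (↑π : ℂ) by ring, ← Complex.ofReal_cos, Real.cos_pi]
    norm_num
  have hG2 : Complex.Gamma 2 = 1 := by
    rw [show (2:ℂ) = 1 + 1 by norm_num, Complex.Gamma_add_one _ one_ne_zero,
      Complex.Gamma_one, mul_one]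
  have hpow : ((2 * ↑π : ℂ)) ^ (-2 : ℂ) = 1 / (2 * ↑π) ^ 2 := by
    rw [Complex.cpow_neg, show ((2:ℂ)) = ((2:ℕ):ℂ) by norm_num, Complex.cpow_natCast]
    simp [one_div]
  rw [hs0, hc0, hG2, hpow]
  have hπc : (↑π : ℂ) ≠ 0 := Complex.ofReal_ne_zero.mpr hπ
  field_simp
  ring

open Real Complex HurwitzZeta

lemma aux_circ (x : ℝ) : ((1 - x : ℝ) : UnitAddCircle) = -((x : ℝ) : UnitAddCircle) := by
  rw [show (1 - x : ℝ) = -x + 1 by ring, ← AddCircle.coe_neg]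
  exact AddCircle.coe_add_period (p := 1) (-x)

lemma aux_sum (x : ℝ) :
    HasSum (fun n : ℕ => ((Real.sin (2 * π * (n + 1) * x) / ((n + 1 : ℝ) ^ 2) : ℝ) : ℂ))
      (sinZeta (x : UnitAddCircle) 2) := by
  have hs : (1:ℝ) < Complex.re 2 := by norm_num
  have hS := hasSum_nat_sinZeta x hs
  have hS2 := (hasSum_nat_add_iff' (f := fun n : ℕ =>
      ((Real.sin (2 * π * x * n) : ℂ) / (n : ℂ) ^ (2:ℂ))) 1).mpr hS
  simp only [Finset.range_one, Finset.sum_singleton, Nat.cast_zero, mul_zero,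
    Real.sin_zero, Complex.ofReal_zero, zero_div, sub_zero] at hS2
  have heq : (fun n : ℕ => ((Real.sin (2 * π * (n + 1) * x) / ((n + 1 : ℝ) ^ 2) : ℝ) : ℂ))
      = fun n : ℕ => ((Real.sin (2 * π * x * (n + 1 : ℕ)) : ℂ) / ((n + 1 : ℕ) : ℂ) ^ (2:ℂ)) := by
    funext n
    rw [show (2:ℂ) = ((2:ℕ):ℂ) by norm_num, Complex.cpow_natCast]
    have harg : 2 * π * x * ((n : ℕ) + 1 : ℕ) = 2 * π * ((n:ℝ) + 1) * x := by
      push_cast; ring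
    rw [harg]
    push_cast
    ring
  rw [heq]
  exact hS2
theorem stmt_19 (x : ℝ) (hx : x ∈ Set.Ioo (0 : ℝ) 1) :
    deriv (fun s : ℂ => HurwitzZeta.hurwitzZeta (x : UnitAddCircle) s) (-1) -
        deriv (fun s : ℂ => HurwitzZeta.hurwitzZeta ((1 - x : ℝ) : UnitAddCircle) s) (-1) =
      ((1 / (2 * π) * ∑' n : ℕ, Real.sin (2 * π * (n + 1) * x) / ((n + 1 : ℝ) ^ 2) : ℝ) : ℂ) := by
  classical
  set S := sinZeta (x : UnitAddCircle) 2 with hSdef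
  have hsum := aux_sum x
  have h1 : HasSum (fun n : ℕ => Real.sin (2 * π * (n + 1) * x) / ((n + 1 : ℝ) ^ 2)) S.re := by
    have := (Complex.hasSum_iff _ _).mp hsum
    simpa only [Complex.ofReal_re] using this.1
  have h2 : HasSum (fun _ : ℕ => (0:ℝ)) S.im := by
    have := (Complex.hasSum_iff _ _).mp hsum
    simpa only [Complex.ofReal_im] using this.2
  have him : S.im = 0 := h2.unique hasSum_zero
  have hSre : ((S.re : ℝ) : ℂ) = S := by
    apply Complex.ext <;> simp [him]
  have hE : HasDerivAt (fun s : ℂ => hurwitzZetaEven (x : UnitAddCircle) s)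
      (deriv (fun s : ℂ => hurwitzZetaEven (x : UnitAddCircle) s) (-1)) (-1) :=
    (differentiableAt_hurwitzZetaEven _ (by norm_num : (-1:ℂ) ≠ 1)).hasDerivAt
  have hO : HasDerivAt (fun s : ℂ => hurwitzZetaOdd (x : UnitAddCircle) s)
      (deriv (fun s : ℂ => hurwitzZetaOdd (x : UnitAddCircle) s) (-1)) (-1) :=
    (differentiable_hurwitzZetaOdd (x : UnitAddCircle) (-1)).hasDerivAt
  have hd1 : HasDerivAt (fun s : ℂ => HurwitzZeta.hurwitzZeta (x : UnitAddCircle) s)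
      (deriv (fun s : ℂ => hurwitzZetaEven (x : UnitAddCircle) s) (-1) +
        deriv (fun s : ℂ => hurwitzZetaOdd (x : UnitAddCircle) s) (-1)) (-1) := hE.add hO
  have hfun : (fun s : ℂ => HurwitzZeta.hurwitzZeta ((1 - x : ℝ) : UnitAddCircle) s)
      = fun s : ℂ => hurwitzZetaEven (x : UnitAddCircle) s
          - hurwitzZetaOdd (x : UnitAddCircle) s := by
    funext s
    rw [aux_circ, hurwitzZeta, hurwitzZetaEven_neg, hurwitzZetaOdd_neg, ← sub_eq_add_neg]
  have hd2 : HasDerivAt (fun s : ℂ => HurwitzZeta.hurwitzZeta ((1 - x : ℝ) : UnitAddCircle) s)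
      (deriv (fun s : ℂ => hurwitzZetaEven (x : UnitAddCircle) s) (-1) -
        deriv (fun s : ℂ => hurwitzZetaOdd (x : UnitAddCircle) s) (-1)) (-1) := by
    rw [hfun]; exact hE.sub hO
  rw [hd1.deriv, hd2.deriv, h1.tsum_eq, aux_deriv_odd, ← hSdef]
  rw [Complex.ofReal_mul, hSre]
  have hπc : (↑π : ℂ) ≠ 0 := Complex.ofReal_ne_zero.mpr Real.pi_ne_zero
  push_cast
  field_simp
  ring
end
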